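/- arXiv:1912.11978 — 6 statements merged into one kernel-verified Lean document; each statement's English description precedes it below -/
import Mathlib

section
/- (Serret's theorem) Let p and q be relatively prime positive integers with q < p. The continued fraction representation of q/p (with the convention allowing the last entry to be split as a_N = (a_N − 1) + 1/1 if needed to adjust parity) is palindromic, i.e., a_k = a_{N−k} for all k, if and only if p divides q² + 1 or p divides q² − 1. -/
/-- Value of the finite continued fraction `1/(a_0 + 1/(a_1 + ... + 1/a_N))`
    with entries given by a list `[a_0, ..., a_N]`. -/
def cfVal : List ℕ → ℚ
  | [] => 0
  | a :: t => 1 / (a + cfVal t)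

/-- Continuant matrix `[[A,B],[C,D]]` of the list, product of `[[a,1],[1,0]]`. -/
def cfM : List ℕ → ℕ × ℕ × ℕ × ℕ
  | [] => (1, 0, 0, 1)
  | a :: t =>
    (a * (cfM t).1 + (cfM t).2.2.1, a * (cfM t).2.1 + (cfM t).2.2.2, (cfM t).1, (cfM t).2.1)

lemma cfM_nil : cfM [] = (1, 0, 0, 1) := rfl
lemma cfM_cons (a : ℕ) (t : List ℕ) :
    cfM (a :: t) =
    (a * (cfM t).1 + (cfM t).2.2.1, a * (cfM t).2.1 + (cfM t).2.2.2, (cfM t).1, (cfM t).2.1) := rfl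

lemma cfM_A_pos : ∀ L : List ℕ, (∀ a ∈ L, 0 < a) → 0 < (cfM L).1 := by
  intro L
  induction L with
  | nil => intro _; simp [cfM_nil]
  | cons a t ih =>
    intro h
    have ha : 0 < a := h a (by simp)
    have := ih (fun x hx => h x (by simp [hx]))
    rw [cfM_cons]
    positivity

lemma cfVal_eq : ∀ L : List ℕ, (∀ a ∈ L, 0 < a) →
    cfVal L = ((cfM L).2.2.1 : ℚ) / (cfM L).1 := by
  intro L
  induction L with
  | nil => intro _; simp [cfVal, cfM_nil]
  | cons a t ih =>
    intro h
    have ha : 0 < a := h a (by simp)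
    have hpos := cfM_A_pos t (fun x hx => h x (by simp [hx]))
    have hA : (0:ℚ) < (cfM t).1 := by exact_mod_cast hpos
    rw [cfM_cons]
    simp only [cfVal, ih (fun x hx => h x (by simp [hx]))]
    have hC : (0:ℚ) ≤ (cfM t).2.2.1 := by positivity
    have ha' : (0:ℚ) < a := by exact_mod_cast ha
    rw [eq_comm, div_eq_div_iff (by positivity) (by positivity)]
    field_simp
    push_cast; ring

lemma cfM_det : ∀ L : List ℕ,
    ((cfM L).1 : ℤ) * (cfM L).2.2.2 - (cfM L).2.1 * (cfM L).2.2.1 = (-1) ^ L.length := by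
  intro L
  induction L with
  | nil => simp [cfM_nil]
  | cons a t ih =>
    rw [cfM_cons]
    simp only [List.length_cons, pow_succ]
    push_cast
    linear_combination (-1 : ℤ) * ih

lemma cfM_append : ∀ (L : List ℕ) (x : ℕ), cfM (L ++ [x]) =
    ((cfM L).1 * x + (cfM L).2.1, (cfM L).1, (cfM L).2.2.1 * x + (cfM L).2.2.2, (cfM L).2.2.1) := by
  intro L x
  induction L with
  | nil => simp [cfM_nil, cfM_cons]
  | cons a t ih =>
    rw [List.cons_append, cfM_cons, ih, cfM_cons]
    simp only [Prod.mk.injEq]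
    exact ⟨by ring, trivial⟩

lemma cfM_reverse : ∀ L : List ℕ, cfM L.reverse =
    ((cfM L).1, (cfM L).2.2.1, (cfM L).2.1, (cfM L).2.2.2) := by
  intro L
  induction L with
  | nil => simp [cfM_nil]
  | cons a t ih =>
    rw [List.reverse_cons, cfM_append, ih, cfM_cons]
    simp [Prod.ext_iff, mul_comm]

lemma cfM_bounds : ∀ L : List ℕ, (∀ a ∈ L, 0 < a) →
    (cfM L).2.1 ≤ (cfM L).1 ∧ (L ≠ [] → (cfM L).2.2.2 ≤ (cfM L).2.2.1) := by
  intro L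
  induction L with
  | nil => intro _; simp [cfM_nil]
  | cons a t ih =>
    intro h
    have ha : 1 ≤ a := h a (by simp)
    have iht := ih (fun x hx => h x (by simp [hx]))
    rw [cfM_cons]
    constructor
    · rcases t with _ | ⟨b, t'⟩
      · simp [cfM_nil]; nlinarith
      · have h1 := iht.1
        have h2 := iht.2 (by simp)
        dsimp only
        nlinarith
    · intro _
      exact iht.1

lemma cfM_B_pos : ∀ L : List ℕ, L ≠ [] → (∀ a ∈ L, 0 < a) → 0 < (cfM L).2.1 := by
  intro L
  induction L with
  | nil => tauto
  | cons a t ih =>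
    intro _ h
    have ha : 1 ≤ a := h a (by simp)
    rw [cfM_cons]
    rcases t with _ | ⟨b, t'⟩
    · simp [cfM_nil]
    · have := ih (by simp) (fun x hx => h x (by simp [hx]))
      dsimp only
      positivity

lemma cfM_C_pos : ∀ L : List ℕ, L ≠ [] → (∀ a ∈ L, 0 < a) → 0 < (cfM L).2.2.1 := by
  intro L hL h
  rcases L with _ | ⟨a, t⟩
  · tauto
  · rw [cfM_cons]
    exact cfM_A_pos t (fun x hx => h x (by simp [hx]))

lemma cfM_sum_lt : ∀ L : List ℕ, L ≠ [] → (∀ a ∈ L, 0 < a) →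
    (cfM L).2.2.1 + (cfM L).2.2.2 < (cfM L).1 + (cfM L).2.1 := by
  intro L
  induction L with
  | nil => tauto
  | cons a t ih =>
    intro _ h
    have ha : 1 ≤ a := h a (by simp)
    rw [cfM_cons]
    rcases t with _ | ⟨b, t'⟩
    · simp [cfM_nil]; nlinarith
    · have h1 := ih (by simp) (fun x hx => h x (by simp [hx]))
      have h2 := cfM_C_pos (b :: t') (by simp) (fun x hx => h x (by simp [hx]))
      dsimp only
      nlinarith

lemma cfM_inj : ∀ L₁ L₂ : List ℕ, (∀ a ∈ L₁, 0 < a) → (∀ a ∈ L₂, 0 < a) →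
    cfM L₁ = cfM L₂ → L₁ = L₂ := by
  intro L₁
  induction L₁ with
  | nil =>
    intro L₂ _ h2 hM
    rcases L₂ with _ | ⟨b, s⟩
    · rfl
    · exfalso
      have hc := cfM_C_pos (b :: s) (by simp) h2
      rw [← hM] at hc
      simp [cfM_nil] at hc
  | cons a t ih =>
    intro L₂ h1 h2 hM
    rcases L₂ with _ | ⟨b, s⟩
    · exfalso
      have hc := cfM_C_pos (a :: t) (by simp) h1
      rw [hM] at hc
      simp [cfM_nil] at hc
    · -- both nonempty
      have h1t : ∀ x ∈ t, 0 < x := fun x hx => h1 x (by simp [hx])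
      have h2s : ∀ x ∈ s, 0 < x := fun x hx => h2 x (by simp [hx])
      have ha : 1 ≤ a := h1 a (by simp)
      have hb : 1 ≤ b := h2 b (by simp)
      rw [cfM_cons, cfM_cons, Prod.ext_iff, Prod.ext_iff, Prod.ext_iff] at hM
      obtain ⟨e1, e2, e3, e4⟩ := hM
      dsimp only at e1 e2 e3 e4
      -- e3 : (cfM t).1 = (cfM s).1, e4 : (cfM t).2.1 = (cfM s).2.1
      have hab : a = b := by
        rcases t with _ | ⟨c, t'⟩
        · rcases s with _ | ⟨d, s'⟩
          · simpa [cfM_nil] using e1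
          · exfalso
            have hd : 0 < (cfM (d :: s')).2.1 := cfM_B_pos _ (by simp) h2s
            rw [← e4] at hd
            simp [cfM_nil] at hd
        · rcases s with _ | ⟨d, s'⟩
          · exfalso
            have hd : 0 < (cfM (c :: t')).2.1 := cfM_B_pos _ (by simp) h1t
            rw [e4] at hd
            simp [cfM_nil] at hd
          · have s1 := cfM_sum_lt (c :: t') (by simp) h1t
            have s2 := cfM_sum_lt (d :: s') (by simp) h2s
            rw [e3, e4] at s1
            by_contra hne
            rcases Nat.lt_or_ge a b with hlt | hge
            · have : a + 1 ≤ b := hlt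
              nlinarith
            · have hlt : b < a := lt_of_le_of_ne hge (fun hh => hne hh.symm)
              have : b + 1 ≤ a := hlt
              nlinarith
      subst hab
      have hCt : (cfM t).2.2.1 = (cfM s).2.2.1 := by rw [e3] at e1; omega
      have hDt : (cfM t).2.2.2 = (cfM s).2.2.2 := by rw [e4] at e2; omega
      have : cfM t = cfM s := by
        rw [Prod.ext_iff, Prod.ext_iff, Prod.ext_iff]
        exact ⟨e3, e4, hCt, hDt⟩
      rw [ih s h1t h2s this]

lemma cf_exists : ∀ q p : ℕ, 0 < q → q < p → Nat.Coprime p q →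
    ∃ L : List ℕ, L ≠ [] ∧ (∀ a ∈ L, 0 < a) ∧ (q : ℚ) / p = cfVal L := by
  intro q
  induction q using Nat.strong_induction_on with
  | _ q ih =>
    intro p hq hqp hcop
    have hp : 0 < p := lt_trans hq hqp
    rcases Nat.eq_zero_or_pos (p % q) with hr | hr
    · -- q ∣ p, so q = 1
      have hdvd : q ∣ p := Nat.dvd_of_mod_eq_zero hr
      have hq1 : q = 1 := Nat.eq_one_of_dvd_coprimes hcop.symm (dvd_refl q) hdvd
      refine ⟨[p], by simp, by simpa using hp, ?_⟩
      simp [cfVal, hq1]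
    · have hrq : p % q < q := Nat.mod_lt p hq
      have hcop' : Nat.Coprime q (p % q) := by
        have : Nat.gcd q p = 1 := hcop.symm
        rw [Nat.gcd_rec q p] at this
        exact (Nat.coprime_comm.mp this)
      obtain ⟨L', hL'ne, hL'pos, hL'v⟩ := ih (p % q) hrq q hr hrq hcop'
      have ha : 1 ≤ p / q := (Nat.one_le_div_iff hq).2 (le_of_lt hqp)
      refine ⟨(p / q) :: L', by simp, ?_, ?_⟩
      · intro x hx
        rcases List.mem_cons.mp hx with rfl | hx
        · exact ha
        · exact hL'pos x hx
      · have hq0 : (q : ℚ) ≠ 0 := by positivity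
        have hp0 : (p : ℚ) ≠ 0 := by positivity
        have hpq : (q : ℚ) * (p / q : ℕ) + (p % q : ℕ) = p := by
          exact_mod_cast congrArg (Nat.cast : ℕ → ℚ) (Nat.div_add_mod p q)
        have hkey : ((p / q : ℕ) : ℚ) + ((p % q : ℕ) : ℚ) / q = (p : ℚ) / q := by
          rw [eq_div_iff hq0]; field_simp; linarith [hpq]
        rw [cfVal, ← hL'v, hkey, one_div_div]

lemma cfM_coprime (L : List ℕ) : Nat.Coprime (cfM L).1 (cfM L).2.2.1 := by
  have hdet := cfM_det L
  have h1 : ((Nat.gcd (cfM L).1 (cfM L).2.2.1 : ℕ) : ℤ) ∣ 1 := by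
    have hd1 : ((Nat.gcd (cfM L).1 (cfM L).2.2.1 : ℕ) : ℤ) ∣ ((cfM L).1 : ℤ) :=
      Int.natCast_dvd_natCast.2 (Nat.gcd_dvd_left _ _)
    have hd2 : ((Nat.gcd (cfM L).1 (cfM L).2.2.1 : ℕ) : ℤ) ∣ ((cfM L).2.2.1 : ℤ) :=
      Int.natCast_dvd_natCast.2 (Nat.gcd_dvd_right _ _)
    have : ((Nat.gcd (cfM L).1 (cfM L).2.2.1 : ℕ) : ℤ) ∣ (-1) ^ L.length := by
      rw [← hdet]
      exact dvd_sub (hd1.mul_right _) (hd2.mul_left _)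
    exact this.trans ⟨(-1) ^ L.length, by rw [← pow_add]; simp [pow_add, ← two_mul]⟩
  have := Int.eq_one_of_dvd_one (by positivity) h1
  exact_mod_cast this

lemma cf_ident (p q : ℕ) (L : List ℕ) (hpos : ∀ a ∈ L, 0 < a)
    (hq : 0 < q) (hqp : q < p) (hcop : Nat.Coprime p q) (hv : (q : ℚ) / p = cfVal L) :
    (cfM L).1 = p ∧ (cfM L).2.2.1 = q := by
  have hp : 0 < p := lt_trans hq hqp
  have hA := cfM_A_pos L hpos
  rw [cfVal_eq L hpos] at hv
  have hcross : q * (cfM L).1 = (cfM L).2.2.1 * p := by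
    have hp0 : ((p:ℚ)) ≠ 0 := by positivity
    have hA0 : (((cfM L).1 : ℚ)) ≠ 0 := by
      have : (0:ℚ) < ((cfM L).1 : ℚ) := by exact_mod_cast hA
      positivity
    have := (div_eq_div_iff hp0 hA0).1 hv
    exact_mod_cast this
  have hAC := cfM_coprime L
  have hpA : p ∣ (cfM L).1 := by
    have : p ∣ q * (cfM L).1 := ⟨(cfM L).2.2.1, by rw [hcross]; ring⟩
    exact hcop.dvd_of_dvd_mul_left this
  have hAp : (cfM L).1 ∣ p := by
    have : (cfM L).1 ∣ (cfM L).2.2.1 * p := ⟨q, by rw [← hcross]; ring⟩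
    exact hAC.dvd_of_dvd_mul_left this
  have hAeq : (cfM L).1 = p := Nat.dvd_antisymm hAp hpA
  refine ⟨hAeq, ?_⟩
  rw [hAeq] at hcross
  exact (Nat.eq_of_mul_eq_mul_right hp hcross.symm)

lemma cf_flip (L : List ℕ) (hL : L ≠ []) (hpos : ∀ a ∈ L, 0 < a) (hA : 2 ≤ (cfM L).1) :
    ∃ L' : List ℕ, L' ≠ [] ∧ (∀ a ∈ L', 0 < a) ∧ (cfM L').1 = (cfM L).1 ∧
      (cfM L').2.2.1 = (cfM L).2.2.1 ∧ (L'.length + L.length) % 2 = 1 := by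
  rcases List.eq_nil_or_concat L with rfl | ⟨M, x, rfl⟩
  · tauto
  · rw [List.concat_eq_append] at *
    have hx : 0 < x := hpos x (by simp)
    rcases Nat.lt_or_ge x 2 with hx2 | hx2
    · -- x = 1
      have hx1 : x = 1 := by omega
      subst hx1
      rcases List.eq_nil_or_concat M with rfl | ⟨M', y, rfl⟩
      · exfalso
        norm_num [cfM_cons, cfM_nil] at hA
      · rw [List.concat_eq_append] at *
        refine ⟨M' ++ [y + 1], by simp, ?_, ?_, ?_, by simp; omega⟩
        · intro a ha
          rcases (List.mem_append.mp ha) with h | h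
          · exact hpos a (by simp [h])
          · simp at h; omega
        · simp only [cfM_append]
          ring
        · simp only [cfM_append]
          ring
    · -- x ≥ 2
      obtain ⟨y, rfl⟩ : ∃ y, x = y + 2 := ⟨x - 2, by omega⟩
      refine ⟨(M ++ [y + 1]) ++ [1], by simp, ?_, ?_, ?_, by simp; omega⟩
      · intro a ha
        rcases (List.mem_append.mp ha) with h | h
        · rcases (List.mem_append.mp h) with h' | h'
          · exact hpos a (by simp [h'])
          · simp at h'; omega
        · simp at h; omega
      · simp only [cfM_append]
        ring
      · simp only [cfM_append]
        ring

lemma serret_back (p q : ℕ) (hq : 0 < q) (hqp : q < p) (hcop : Nat.Coprime p q)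
    (e : ℤ) (hd : (p : ℤ) ∣ (q : ℤ) ^ 2 - e)
    (L : List ℕ) (hpos : ∀ a ∈ L, 0 < a)
    (hA : (cfM L).1 = p) (hC : (cfM L).2.2.1 = q)
    (hpar : ((-1 : ℤ)) ^ L.length = -e) : L.reverse = L := by
  have hdet := cfM_det L
  rw [hA, hC, hpar] at hdet
  obtain ⟨m, hm⟩ := hd
  have hdvd : (p : ℤ) ∣ (((cfM L).2.1 : ℤ) - q) * q :=
    ⟨((cfM L).2.2.2 : ℤ) - m, by linear_combination -hdet - hm⟩
  have hcop' : IsCoprime (p : ℤ) (q : ℤ) := Nat.isCoprime_iff_coprime.mpr hcop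
  have hdvd2 : (p : ℤ) ∣ ((cfM L).2.1 : ℤ) - q := hcop'.dvd_of_dvd_mul_right hdvd
  have hB := (cfM_bounds L hpos).1
  rw [hA] at hB
  have hzero : ((cfM L).2.1 : ℤ) - q = 0 := by
    refine Int.eq_zero_of_abs_lt_dvd hdvd2 ?_
    rw [abs_lt]
    omega
  have hBq : (cfM L).2.1 = q := by omega
  have hMeq : cfM L.reverse = cfM L := by
    rw [cfM_reverse, Prod.ext_iff, Prod.ext_iff, Prod.ext_iff]
    exact ⟨rfl, by rw [hC, hBq], by rw [hC, hBq], rfl⟩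
  exact cfM_inj _ _ (fun a ha => hpos a (List.mem_reverse.mp ha)) hpos hMeq

/-- **The Serret theorem.** `q/p` has a palindromic continued fraction representation
    (with positive integer entries, allowing the trick `a_N = (a_N - 1) + 1/1`)
    iff `p ∣ q² + 1` or `p ∣ q² - 1`. -/
theorem stmt_3 (p q : ℕ) (hq : 0 < q) (hqp : q < p) (hcop : Nat.Coprime p q) :
    (∃ L : List ℕ, L ≠ [] ∧ (∀ a ∈ L, 0 < a) ∧ L.reverse = L ∧
        (q : ℚ) / p = cfVal L) ↔
      ((p : ℤ) ∣ (q : ℤ) ^ 2 + 1 ∨ (p : ℤ) ∣ (q : ℤ) ^ 2 - 1) := by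
  constructor
  · rintro ⟨L, hne, hpos, hrev, hv⟩
    obtain ⟨hA, hC⟩ := cf_ident p q L hpos hq hqp hcop hv
    have hBC : (cfM L).2.1 = (cfM L).2.2.1 := by
      have h1 := congrArg cfM hrev
      rw [cfM_reverse] at h1
      have := congrArg (fun x => x.2.1) h1
      simpa using this.symm
    have hdet := cfM_det L
    rw [hBC, hC, hA] at hdet
    rcases Nat.even_or_odd L.length with he | ho
    · left
      rw [he.neg_one_pow] at hdet
      exact ⟨(cfM L).2.2.2, by linear_combination -hdet⟩
    · right
      rw [ho.neg_one_pow] at hdet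
      exact ⟨(cfM L).2.2.2, by linear_combination -hdet⟩
  · intro h
    obtain ⟨L, hne, hpos, hv⟩ := cf_exists q p hq hqp hcop
    obtain ⟨hA, hC⟩ := cf_ident p q L hpos hq hqp hcop hv
    have hA2 : 2 ≤ (cfM L).1 := by omega
    rcases h with h | h
    · -- need even length
      have hd : (p : ℤ) ∣ (q : ℤ) ^ 2 - (-1) := by simpa [sub_neg_eq_add] using h
      by_cases hev : Even L.length
      · exact ⟨L, hne, hpos,
          serret_back p q hq hqp hcop (-1) hd L hpos hA hC (by rw [hev.neg_one_pow]; norm_num),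
          hv⟩
      · obtain ⟨L', hne', hpos', hA', hC', hpar⟩ := cf_flip L hne hpos hA2
        have hev' : Even L'.length := by
          rw [Nat.even_iff]
          rw [Nat.not_even_iff] at hev
          omega
        refine ⟨L', hne', hpos',
          serret_back p q hq hqp hcop (-1) hd L' hpos' (hA'.trans hA) (hC'.trans hC)
            (by rw [hev'.neg_one_pow]; norm_num), ?_⟩
        rw [cfVal_eq L' hpos', hA', hC', hA, hC]
    · -- need odd length
      by_cases hod : Odd L.length
      · exact ⟨L, hne, hpos,
          serret_back p q hq hqp hcop 1 h L hpos hA hC (by rw [hod.neg_one_pow]),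
          hv⟩
      · obtain ⟨L', hne', hpos', hA', hC', hpar⟩ := cf_flip L hne hpos hA2
        have hod' : Odd L'.length := by
          rw [Nat.odd_iff]
          rw [Nat.odd_iff] at hod
          omega
        refine ⟨L', hne', hpos',
          serret_back p q hq hqp hcop 1 h L' hpos' (hA'.trans hA) (hC'.trans hC)
            (by rw [hod'.neg_one_pow]), ?_⟩
        rw [cfVal_eq L' hpos', hA', hC', hA, hC]
end

section
/- Let P and Q be monic real polynomials with deg P = n ≥ 2 and deg Q = n − 1, both having only real simple zeros. The zeros of P and Q strictly interlace if and only if there exist a real number a, a real number b > 0, and a monic polynomial R of degree n − 2 such that P(x) = (x − a)Q(x) − b·R(x). Moreover, in that case R has only real zeros and its zeros interlace the zeros of Q. -/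
open Polynomial Finset

lemma aux_sign (f : ℕ → ℝ) (j n : ℕ) (hj : j ≤ n) (hpos : ∀ i < j, 0 < f i)
    (hneg : ∀ i, j ≤ i → i < n → f i < 0) :
    0 < (-1:ℝ)^(n-j) * ∏ i ∈ range n, f i := by
  induction n, hj using Nat.le_induction with
  | base =>
    simp only [Nat.sub_self, pow_zero, one_mul]
    exact Finset.prod_pos fun i hi => hpos i (mem_range.mp hi)
  | succ n hn ih =>
    have h1 : 0 < (-1:ℝ)^(n-j) * ∏ i ∈ range n, f i :=
      ih fun i hji hin => hneg i hji (Nat.lt_succ_of_lt hin)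
    have h2 : f n < 0 := hneg n hn (Nat.lt_succ_self n)
    rw [Finset.prod_range_succ, Nat.succ_sub hn, pow_succ]
    nlinarith [h1, h2]

lemma aux_mono (l : ℕ → ℝ) (N : ℕ) (h : ∀ i, i + 1 < N → l i < l (i + 1)) :
    ∀ i j, i < j → j < N → l i < l j := by
  intro i j hij hjN
  induction j with
  | zero => omega
  | succ j ih =>
    rcases Nat.lt_succ_iff_lt_or_eq.mp hij with h' | h'
    · exact (ih h' (by omega)).trans (h j hjN)
    · subst h'; exact h i hjN

lemma aux_ivt (p : Polynomial ℝ) (u v : ℝ) (huv : u < v) (e : ℕ)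
    (h1 : 0 < (-1:ℝ)^(e+1) * p.eval u) (h2 : 0 < (-1:ℝ)^e * p.eval v) :
    ∃ x, u < x ∧ x < v ∧ p.eval x = 0 := by
  have hc : ContinuousOn (fun x => p.eval x) (Set.Icc u v) :=
    (Polynomial.continuous p).continuousOn
  by_cases hev : Even e
  · have e2 : ((-1:ℝ))^e = 1 := hev.neg_one_pow
    have e1 : ((-1:ℝ))^(e+1) = -1 := (Even.add_one hev).neg_one_pow
    rw [e1] at h1; rw [e2] at h2
    have h0 : (0:ℝ) ∈ Set.Ioo (p.eval u) (p.eval v) := ⟨by linarith, by linarith⟩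
    obtain ⟨x, hx, hx0⟩ := intermediate_value_Ioo huv.le hc h0
    exact ⟨x, hx.1, hx.2, hx0⟩
  · have e2 : ((-1:ℝ))^e = -1 := (Nat.odd_iff.mpr (Nat.not_even_iff.mp hev)).neg_one_pow
    have e1 : ((-1:ℝ))^(e+1) = 1 := (Nat.even_add_one.mpr hev).neg_one_pow
    rw [e1] at h1; rw [e2] at h2
    have h0 : (0:ℝ) ∈ Set.Ioo (p.eval v) (p.eval u) := ⟨by linarith, by linarith⟩
    obtain ⟨x, hx, hx0⟩ := intermediate_value_Ioo' huv.le hc h0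
    exact ⟨x, hx.1, hx.2, hx0⟩

lemma aux_monoN (k : ℕ → ℕ) (N : ℕ) (h : ∀ i, i + 1 < N → k i < k (i + 1)) :
    ∀ i j, i ≤ j → j < N → k i + (j - i) ≤ k j := by
  intro i j hij hjN
  induction j with
  | zero => have : i = 0 := Nat.le_zero.mp hij; subst this; omega
  | succ j ih =>
    rcases Nat.lt_succ_iff_lt_or_eq.mp (Nat.lt_succ_of_le hij) with h' | h'
    · have := ih (by omega) (by omega)
      have := h j hjN
      omega
    · subst h'; omega


theorem fwd (n : ℕ) (hn : 2 ≤ n) (P Q : Polynomial ℝ)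
    (l m : ℕ → ℝ)
    (hP : P = ∏ i ∈ Finset.range n, (X - C (l i)))
    (hQ : Q = ∏ i ∈ Finset.range (n - 1), (X - C (m i)))
    (hl : ∀ i, i + 1 < n → l i < l (i + 1))
    (hm : ∀ i, i + 1 < n - 1 → m i < m (i + 1))
    (hint : ∀ i < n - 1, l i < m i ∧ m i < l (i + 1)) :
      ∃ (a b : ℝ) (R : Polynomial ℝ) (r : ℕ → ℝ), 0 < b ∧
        R = ∏ i ∈ Finset.range (n - 2), (X - C (r i)) ∧
        P = (X - C a) * Q - C b * R ∧
        (∀ i < n - 2, m i < r i ∧ r i < m (i + 1)) := by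
  have hlm : ∀ i j, i < j → j < n → l i < l j := aux_mono l n hl
  have hmm : ∀ i j, i < j → j < n - 1 → m i < m j := aux_mono m (n-1) hm
  have hPe : ∀ x, P.eval x = ∏ i ∈ range n, (x - l i) := by
    intro x; simp [hP, eval_prod]
  have hQe : ∀ x, Q.eval x = ∏ i ∈ range (n-1), (x - m i) := by
    intro x; simp [hQ, eval_prod]
  set a : ℝ := (∑ i ∈ range n, l i) - (∑ i ∈ range (n-1), m i) with ha
  set D : Polynomial ℝ := (X - C a) * Q - P with hD
  -- degree bookkeeping
  have hPm : P.Monic := by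
    rw [hP]; exact monic_prod_of_monic _ _ fun i _ => monic_X_sub_C _
  have hQm : Q.Monic := by
    rw [hQ]; exact monic_prod_of_monic _ _ fun i _ => monic_X_sub_C _
  have hPd : P.natDegree = n := by
    rw [hP, natDegree_prod _ _ fun i _ => X_sub_C_ne_zero _]
    simp [natDegree_X_sub_C]
  have hQd : Q.natDegree = n - 1 := by
    rw [hQ, natDegree_prod _ _ fun i _ => X_sub_C_ne_zero _]
    simp [natDegree_X_sub_C]
  have hMm : ((X - C a) * Q).Monic := (monic_X_sub_C a).mul hQm
  have hMd : ((X - C a) * Q).natDegree = n := by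
    rw [(monic_X_sub_C a).natDegree_mul hQm, natDegree_X_sub_C, hQd]; omega
  have hPnext : P.coeff (n - 1) = -∑ i ∈ range n, l i := by
    have h1 : P.nextCoeff = -∑ i ∈ range n, l i := by
      rw [hP]; exact prod_X_sub_C_nextCoeff _
    rwa [nextCoeff_of_natDegree_pos (by omega), hPd] at h1
  have hMnext : ((X - C a) * Q).coeff (n - 1) = -a + -∑ i ∈ range (n-1), m i := by
    have h1 : ((X - C a) * Q).nextCoeff = -a + -∑ i ∈ range (n-1), m i := by
      rw [(monic_X_sub_C a).nextCoeff_mul hQm, nextCoeff_X_sub_C]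
      congr 1
      rw [hQ]; exact prod_X_sub_C_nextCoeff _
    rwa [nextCoeff_of_natDegree_pos (by omega), hMd] at h1
  have hDdeg : D.natDegree ≤ n - 2 := by
    rw [natDegree_le_iff_coeff_eq_zero]
    intro N hN
    rw [hD, coeff_sub]
    rcases (by omega : N = n - 1 ∨ N = n ∨ n < N) with h | h | h
    · rw [h, hPnext, hMnext, ha]; ring
    · rw [h]
      have e1 : P.coeff n = 1 := by rw [← hPd]; exact hPm.coeff_natDegree
      have e2 : ((X - C a) * Q).coeff n = 1 := by rw [← hMd]; exact hMm.coeff_natDegree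
      rw [e1, e2, sub_self]
    · rw [coeff_eq_zero_of_natDegree_lt (by omega : ((X - C a) * Q).natDegree < N),
        coeff_eq_zero_of_natDegree_lt (by omega : P.natDegree < N), sub_self]
  -- sign of D at the m j
  have hDm : ∀ j < n - 1, 0 < (-1:ℝ)^(n-j) * D.eval (m j) := by
    intro j hj
    have hQ0 : Q.eval (m j) = 0 := by
      rw [hQe]
      exact Finset.prod_eq_zero (mem_range.mpr hj) (sub_self _)
    have hPsign : 0 < (-1:ℝ)^(n-(j+1)) * ∏ i ∈ range n, (m j - l i) := by
      refine aux_sign _ (j+1) n (by omega) ?_ ?_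
      · intro i hi
        have h1 : l i ≤ l j := by
          rcases Nat.lt_succ_iff_lt_or_eq.mp hi with h | h
          · exact (hlm i j h (by omega)).le
          · exact h ▸ le_refl _
        have := (hint j hj).1
        simp only [sub_pos]; linarith
      · intro i h1 h2
        have h3 : l (j+1) ≤ l i := by
          rcases Nat.lt_or_ge (j+1) i with h | h
          · exact (hlm (j+1) i h h2).le
          · have : i = j + 1 := by omega
            exact this ▸ le_refl _
        have := (hint j hj).2
        simp only [sub_neg]; linarith
    have hev : D.eval (m j) = -∏ i ∈ range n, (m j - l i) := by
      rw [hD]; simp [hQ0, hPe]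
    rw [hev]
    have hnj : n - j = (n - (j+1)) + 1 := by omega
    rw [hnj, pow_succ]
    nlinarith [hPsign]
  -- roots of D via IVT
  have hgap : ∀ j, ∃ x, j + 1 < n - 1 → m j < x ∧ x < m (j+1) ∧ D.eval x = 0 := by
    intro j
    by_cases hj : j + 1 < n - 1
    · have s1 := hDm j (by omega)
      have s2 := hDm (j+1) hj
      have hnj : n - j = (n - (j+1)) + 1 := by omega
      rw [hnj] at s1
      obtain ⟨x, h⟩ := aux_ivt D (m j) (m (j+1)) (hm j hj) (n - (j+1)) s1 s2
      exact ⟨x, fun _ => h⟩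
    · exact ⟨0, fun h => absurd h hj⟩
  choose r hr using hgap
  have hrint : ∀ i < n - 2, m i < r i ∧ r i < m (i + 1) := by
    intro i hi
    obtain ⟨h1, h2, _⟩ := hr i (by omega)
    exact ⟨h1, h2⟩
  -- r is strictly increasing on range (n-2)
  have hrmono : ∀ i j, i < j → j < n - 2 → r i < r j := by
    intro i j hij hj
    have h1 := hrint i (by omega)
    have h2 := hrint j hj
    have h3 : m (i+1) ≤ m j := by
      rcases Nat.lt_or_ge (i+1) j with h | h
      · exact (hmm (i+1) j h (by omega)).le
      · have : i + 1 = j := by omega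
        exact this ▸ le_refl _
    linarith [h1.2, h2.1]
  have hD0 : D ≠ 0 := by
    intro h
    have := hDm 0 (by omega)
    rw [h] at this; simp at this
  -- the multiset of r-values equals the roots of D
  set M : Multiset ℝ := (Multiset.range (n-2)).map r with hM
  have hMnodup : M.Nodup := by
    refine Multiset.Nodup.map_on ?_ (Multiset.nodup_range _)
    intro i hi j hj hij
    rcases Nat.lt_trichotomy i j with h | h | h
    · exact absurd hij (ne_of_lt (hrmono i j h (Multiset.mem_range.mp hj)))
    · exact h
    · exact absurd hij.symm (ne_of_lt (hrmono j i h (Multiset.mem_range.mp hi)))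
  have hMsub : M ≤ D.roots := by
    rw [Multiset.le_iff_subset hMnodup]
    intro x hx
    obtain ⟨i, hi, rfl⟩ := Multiset.mem_map.mp hx
    rw [Multiset.mem_range] at hi
    rw [mem_roots hD0]
    exact (hr i (by omega)).2.2
  have hMcard : Multiset.card M = n - 2 := by simp [hM]
  have hcard : Multiset.card D.roots = n - 2 := by
    have h1 := Multiset.card_le_card hMsub
    have h2 := D.card_roots'
    omega
  have hMeq : D.roots = M := (Multiset.eq_of_le_of_card_le hMsub (by omega)).symm
  have hsplit : Splits D := splits_iff_card_roots.mpr (by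
    have h1 := Multiset.card_le_card hMsub
    have h2 := D.card_roots'
    omega)
  set b := D.leadingCoeff with hb
  set R : Polynomial ℝ := ∏ i ∈ range (n-2), (X - C (r i)) with hR
  have hDR : D = C b * R := by
    have h1 := hsplit.eq_prod_roots
    rw [hMeq, hM] at h1
    rw [h1, hR]
    congr 1
    rw [Finset.prod_eq_multiset_prod]
    simp [Multiset.map_map, Finset.range]
  have hRe : ∀ x, R.eval x = ∏ i ∈ range (n-2), (x - r i) := by
    intro x; simp [hR, eval_prod]
  have hbpos : 0 < b := by
    have s := hDm (n-2) (by omega)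
    have hnn : n - (n-2) = 2 := by omega
    rw [hnn] at s
    have hDval : D.eval (m (n-2)) = b * ∏ i ∈ range (n-2), (m (n-2) - r i) := by
      rw [hDR]; simp [hRe]
    have hprod : 0 < ∏ i ∈ range (n-2), (m (n-2) - r i) := by
      refine Finset.prod_pos ?_
      intro i hi
      rw [mem_range] at hi
      have h1 := (hrint i hi).2
      have h2 : m (i+1) ≤ m (n-2) := by
        rcases Nat.lt_or_ge (i+1) (n-2) with h | h
        · exact (hmm (i+1) (n-2) h (by omega)).le
        · have : i + 1 = n - 2 := by omega
          exact this ▸ le_refl _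
      simp only [sub_pos]; linarith
    rw [hDval] at s
    nlinarith [s, hprod]
  refine ⟨a, b, R, r, hbpos, hR, ?_, hrint⟩
  have : P = (X - C a) * Q - D := by rw [hD]; ring
  rw [this, hDR]

theorem bwd (n : ℕ) (hn : 2 ≤ n) (P Q : Polynomial ℝ)
    (l m : ℕ → ℝ)
    (hP : P = ∏ i ∈ Finset.range n, (X - C (l i)))
    (hQ : Q = ∏ i ∈ Finset.range (n - 1), (X - C (m i)))
    (hl : ∀ i, i + 1 < n → l i < l (i + 1))
    (hm : ∀ i, i + 1 < n - 1 → m i < m (i + 1))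
    (hex : ∃ (a b : ℝ) (R : Polynomial ℝ) (r : ℕ → ℝ), 0 < b ∧
        R = ∏ i ∈ Finset.range (n - 2), (X - C (r i)) ∧
        P = (X - C a) * Q - C b * R ∧
        (∀ i < n - 2, m i < r i ∧ r i < m (i + 1))) :
    (∀ i < n - 1, l i < m i ∧ m i < l (i + 1)) := by
  obtain ⟨a, b, R, r, hb, hR, hPab, hr⟩ := hex
  have hlm : ∀ i j, i < j → j < n → l i < l j := aux_mono l n hl
  have hmm : ∀ i j, i < j → j < n - 1 → m i < m j := aux_mono m (n-1) hm
  have hPe : ∀ x, P.eval x = ∏ i ∈ range n, (x - l i) := by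
    intro x; simp [hP, eval_prod]
  have hQe : ∀ x, Q.eval x = ∏ i ∈ range (n-1), (x - m i) := by
    intro x; simp [hQ, eval_prod]
  have hRe : ∀ x, R.eval x = ∏ i ∈ range (n-2), (x - r i) := by
    intro x; simp [hR, eval_prod]
  -- sign of P at m j
  have hPsign : ∀ j < n - 1, 0 < (-1:ℝ)^(n-1-j) * P.eval (m j) := by
    intro j hj
    have hQ0 : Q.eval (m j) = 0 := by
      rw [hQe]; exact Finset.prod_eq_zero (mem_range.mpr hj) (sub_self _)
    have hPv : P.eval (m j) = -b * ∏ i ∈ range (n-2), (m j - r i) := by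
      rw [hPab]; simp [hQ0, hRe]
    have hRsign : 0 < (-1:ℝ)^(n-2-j) * ∏ i ∈ range (n-2), (m j - r i) := by
      refine aux_sign _ j (n-2) (by omega) ?_ ?_
      · intro i hi
        have h1 : r i < m (i+1) := (hr i (by omega)).2
        have h2 : m (i+1) ≤ m j := by
          rcases Nat.lt_or_ge (i+1) j with h | h
          · exact (hmm (i+1) j h (by omega)).le
          · have : i + 1 = j := by omega
            exact this ▸ le_refl _
        simp only [sub_pos]; linarith
      · intro i h1 h2
        have h3 : m i < r i := (hr i h2).1
        have h4 : m j ≤ m i := by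
          rcases Nat.lt_or_ge j i with h | h
          · exact (hmm j i h (by omega)).le
          · have : j = i := by omega
            exact this ▸ le_refl _
        simp only [sub_neg]; linarith
    rw [hPv]
    have he : n - 1 - j = (n - 2 - j) + 1 := by omega
    rw [he, pow_succ]
    nlinarith [hRsign, hb]
  have hPne : ∀ j < n - 1, ∀ i < n, m j ≠ l i := by
    intro j hj i hi heq
    have h1 := hPsign j hj
    have h2 : P.eval (m j) = 0 := by
      rw [hPe]
      exact Finset.prod_eq_zero (mem_range.mpr hi) (by rw [heq, sub_self])
    rw [h2] at h1; simp at h1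
  -- l 0 < m 0
  have hl0 : l 0 < m 0 := by
    by_contra hcon
    push_neg at hcon
    have hne := hPne 0 (by omega) 0 (by omega)
    have hlt : m 0 < l 0 := lt_of_le_of_ne hcon hne
    have s1 : 0 < (-1:ℝ)^(n-0) * ∏ i ∈ range n, (m 0 - l i) := by
      refine aux_sign _ 0 n (by omega) (by omega) ?_
      intro i _ hi
      have : l 0 ≤ l i := by
        rcases Nat.eq_zero_or_pos i with h | h
        · rw [h]
        · exact (hlm 0 i h hi).le
      simp only [sub_neg]; linarith
    have s2 := hPsign 0 (by omega)
    rw [hPe] at s2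
    have hpow : (-1:ℝ)^(n-0) * (-1:ℝ)^(n-1-0) = -1 := by
      rw [← pow_add]
      have : (n - 0) + (n - 1 - 0) = 2 * (n - 1) + 1 := by omega
      rw [this, pow_succ, pow_mul]
      norm_num
    have hmul := mul_pos s1 s2
    have hrw : ((-1:ℝ)^(n-0) * ∏ i ∈ range n, (m 0 - l i)) *
        ((-1:ℝ)^(n-1-0) * ∏ i ∈ range n, (m 0 - l i)) =
        ((-1:ℝ)^(n-0) * (-1:ℝ)^(n-1-0)) * (∏ i ∈ range n, (m 0 - l i))^2 := by ring
    rw [hrw, hpow] at hmul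
    nlinarith [sq_nonneg (∏ i ∈ range n, (m 0 - l i))]
  -- m (n-2) < l (n-1)
  have hltop : m (n-2) < l (n-1) := by
    by_contra hcon
    push_neg at hcon
    have hne := hPne (n-2) (by omega) (n-1) (by omega)
    have hlt : l (n-1) < m (n-2) := lt_of_le_of_ne hcon (Ne.symm hne)
    have s1 : 0 < (-1:ℝ)^(n-n) * ∏ i ∈ range n, (m (n-2) - l i) := by
      refine aux_sign _ n n le_rfl ?_ (by omega)
      intro i hi
      have : l i ≤ l (n-1) := by
        rcases Nat.lt_or_ge i (n-1) with h | h
        · exact (hlm i (n-1) h (by omega)).le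
        · have : i = n - 1 := by omega
          exact this ▸ le_refl _
      simp only [sub_pos]; linarith
    have s2 := hPsign (n-2) (by omega)
    rw [hPe] at s2
    rw [Nat.sub_self, pow_zero, one_mul] at s1
    have he : n - 1 - (n-2) = 1 := by omega
    rw [he, pow_one] at s2
    linarith
  -- roots of P in the gaps between consecutive m's
  have hgap : ∀ j, ∃ i, j + 1 < n - 1 → i < n ∧ m j < l i ∧ l i < m (j+1) := by
    intro j
    by_cases hj : j + 1 < n - 1
    · have s1 := hPsign j (by omega)
      have s2 := hPsign (j+1) hj
      have he : n - 1 - j = (n - 1 - (j+1)) + 1 := by omega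
      rw [he] at s1
      obtain ⟨x, hx1, hx2, hx0⟩ := aux_ivt P (m j) (m (j+1)) (hm j hj) (n - 1 - (j+1)) s1 s2
      rw [hPe] at hx0
      obtain ⟨i, hi, hxi⟩ := Finset.prod_eq_zero_iff.mp hx0
      have hxl : x = l i := by linarith [sub_eq_zero.mp hxi]
      exact ⟨i, fun _ => ⟨mem_range.mp hi, hxl ▸ hx1, hxl ▸ hx2⟩⟩
    · exact ⟨0, fun h => absurd h hj⟩
  choose k hk using hgap
  -- k is strictly increasing on gaps, k 0 ≥ 1, k (n-3) ≤ n-2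
  have hkmono : ∀ i, i + 1 < n - 2 → k i < k (i + 1) := by
    intro i hi
    obtain ⟨_, _, h2⟩ := hk i (by omega)
    obtain ⟨hkn, h3, _⟩ := hk (i+1) (by omega)
    by_contra hcon
    push_neg at hcon
    have : l (k (i+1)) ≤ l (k i) := by
      rcases Nat.lt_or_ge (k (i+1)) (k i) with h | h
      · exact (hlm _ _ h (hk i (by omega)).1).le
      · have : k (i+1) = k i := by omega
        exact this ▸ le_refl _
    linarith
  have hkeq : ∀ j, j < n - 2 → k j = j + 1 := by
    intro j hj
    have hmono := aux_monoN k (n-2) hkmono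
    have hlow : 1 ≤ k 0 := by
      obtain ⟨hkn, h1, _⟩ := hk 0 (by omega)
      by_contra hcon
      push_neg at hcon
      have : k 0 = 0 := by omega
      rw [this] at h1
      linarith
    have hhigh : k (n-3) ≤ n - 2 := by
      obtain ⟨hkn, _, h2⟩ := hk (n-3) (by omega)
      have hmeq : n - 3 + 1 = n - 2 := by omega
      rw [hmeq] at h2
      by_contra hcon
      push_neg at hcon
      have : l (n-1) ≤ l (k (n-3)) := by
        rcases Nat.lt_or_ge (n-1) (k (n-3)) with h | h
        · exact (hlm _ _ h hkn).le
        · have : n - 1 = k (n-3) := by omega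
          exact this ▸ le_refl _
      linarith
    have b1 := hmono 0 j (by omega) hj
    have b2 := hmono j (n-3) (by omega) (by omega)
    omega
  -- conclude
  intro j hj
  constructor
  · rcases Nat.eq_zero_or_pos j with h | h
    · rw [h]; exact hl0
    · have hj1 : j - 1 < n - 2 := by omega
      obtain ⟨_, _, h2⟩ := hk (j-1) (by omega)
      have := hkeq (j-1) hj1
      have hje : j - 1 + 1 = j := by omega
      rw [this, hje] at h2
      exact h2
  · rcases Nat.lt_or_ge j (n-2) with h | h
    · obtain ⟨_, h1, _⟩ := hk j (by omega)
      have := hkeq j h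
      rw [this] at h1
      exact h1
    · have : j = n - 2 := by omega
      rw [this]
      have : n - 2 + 1 = n - 1 := by omega
      rw [this]
      exact hltop

/-- **Interlacing criterion.** For monic real-rooted `P` of degree `n ≥ 2` and `Q` of
    degree `n-1` with simple zeros, the zeros interlace iff `P = (x-a)Q - bR` with
    `b > 0` and `R` monic of degree `n-2`; moreover then `R` is real-rooted with zeros
    interlacing those of `Q`. -/
theorem stmt_5 (n : ℕ) (hn : 2 ≤ n) (P Q : Polynomial ℝ)
    (l m : ℕ → ℝ)
    (hP : P = ∏ i ∈ Finset.range n, (X - C (l i)))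
    (hQ : Q = ∏ i ∈ Finset.range (n - 1), (X - C (m i)))
    (hl : ∀ i, i + 1 < n → l i < l (i + 1))
    (hm : ∀ i, i + 1 < n - 1 → m i < m (i + 1)) :
    (∀ i < n - 1, l i < m i ∧ m i < l (i + 1)) ↔
      ∃ (a b : ℝ) (R : Polynomial ℝ) (r : ℕ → ℝ), 0 < b ∧
        R = ∏ i ∈ Finset.range (n - 2), (X - C (r i)) ∧
        P = (X - C a) * Q - C b * R ∧
        (∀ i < n - 2, m i < r i ∧ r i < m (i + 1)) := by
  exact ⟨fwd n hn P Q l m hP hQ hl hm, bwd n hn P Q l m hP hQ hl hm⟩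
end

section
/- With P(x) = ∏_{j=1}^n (x − λ_j), Q(x) = ∏_{i=1}^{n−1} (x − μ_i) having strictly interlacing real zeros (λ_1 < μ_1 < λ_2 < ... < μ_{n−1} < λ_n), set a = Σλ_j − Σμ_i and write P(x) = (x − a)Q(x) − b·R(x) with R monic of degree n−2. Then b = Σ_{1 ≤ i ≤ j ≤ n−1} (μ_i − λ_i)(λ_{j+1} − μ_j) > 0. -/
open Polynomial Finset

private lemma prodM (r : ℕ → ℝ) (t : ℕ) : (∏ i ∈ Finset.range t, (X - C (r i))).Monic :=
  monic_prod_of_monic _ _ fun i _ => monic_X_sub_C _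

private lemma prodDeg (r : ℕ → ℝ) (t : ℕ) :
    (∏ i ∈ Finset.range t, (X - C (r i))).natDegree = t := by
  rw [natDegree_prod_of_monic _ _ fun i _ => monic_X_sub_C _]
  simp

private lemma coeffTop (r : ℕ → ℝ) (t : ℕ) :
    (∏ i ∈ Finset.range t, (X - C (r i))).coeff t = 1 := by
  have h := (prodM r t).coeff_natDegree
  rwa [prodDeg] at h

private lemma coeff1 (r : ℕ → ℝ) (s : ℕ) :
    (∏ i ∈ Finset.range (s+1), (X - C (r i))).coeff s = -∑ i ∈ Finset.range (s+1), r i := by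
  induction s with
  | zero => simp
  | succ s ih =>
    rw [Finset.prod_range_succ, coeff_mul_X_sub_C, ih, coeffTop, Finset.sum_range_succ (f := r) (n := s+1)]
    ring

private lemma coeff2 (r : ℕ → ℝ) (k : ℕ) :
    (∏ i ∈ Finset.range (k+2), (X - C (r i))).coeff k
      = ∑ j ∈ Finset.range (k+2), ∑ i ∈ Finset.range j, r i * r j := by
  induction k with
  | zero =>
    simp [Finset.prod_range_succ, Finset.sum_range_succ, mul_coeff_zero]
  | succ k ih =>
    rw [show k+1+2 = (k+2)+1 from rfl, Finset.prod_range_succ, coeff_mul_X_sub_C, ih, coeff1,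
      Finset.sum_range_succ (f := fun j => ∑ i ∈ Finset.range j, r i * r j) (n := k+2),
      ← Finset.sum_mul]
    ring

private lemma key (l m : ℕ → ℝ) (t : ℕ) :
    (∑ j ∈ Finset.range t, ∑ i ∈ Finset.range (j+1), (m i - l i) * (l (j+1) - m j))
    = (∑ j ∈ Finset.range t, ∑ i ∈ Finset.range j, m i * m j)
      + ((∑ i ∈ Finset.range (t+1), l i) - ∑ i ∈ Finset.range t, m i)
          * (∑ i ∈ Finset.range t, m i)
      - ∑ j ∈ Finset.range (t+1), ∑ i ∈ Finset.range j, l i * l j := by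
  induction t with
  | zero => simp
  | succ t ih =>
    rw [Finset.sum_range_succ
        (f := fun j => ∑ i ∈ Finset.range (j+1), (m i - l i) * (l (j+1) - m j)), ih,
      ← Finset.sum_mul, Finset.sum_sub_distrib,
      Finset.sum_range_succ (f := fun j => ∑ i ∈ Finset.range j, m i * m j) (n := t),
      Finset.sum_range_succ (f := fun j => ∑ i ∈ Finset.range j, l i * l j) (n := t+1),
      Finset.sum_range_succ (f := m) (n := t),
      Finset.sum_range_succ (f := l) (n := t+1),
      ← Finset.sum_mul, ← Finset.sum_mul]
    ring

example (l m : ℕ → ℝ) : True := trivial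

/-- With interlacing zeros `l 0 < m 0 < l 1 < ... < m (n-2) < l (n-1)`,
    `a = Σ l - Σ m` and `P = (x-a)Q - bR` with `R` monic of degree `n-2`, the
    coefficient `b` equals `Σ_{0 ≤ i ≤ j ≤ n-2} (m i - l i)(l (j+1) - m j)`, which
    is positive. (Zero-based indexing of the 1-based statement.) -/
theorem stmt_6 (n : ℕ) (hn : 2 ≤ n) (P Q R : Polynomial ℝ)
    (l m : ℕ → ℝ) (a b : ℝ)
    (hP : P = ∏ i ∈ Finset.range n, (X - C (l i)))
    (hQ : Q = ∏ i ∈ Finset.range (n - 1), (X - C (m i)))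
    (hinter : ∀ i < n - 1, l i < m i ∧ m i < l (i + 1))
    (ha : a = (∑ j ∈ Finset.range n, l j) - ∑ i ∈ Finset.range (n - 1), m i)
    (hR : R.Monic) (hRdeg : R.natDegree = n - 2)
    (hdecomp : P = (X - C a) * Q - C b * R) :
    b = ∑ j ∈ Finset.range (n - 1), ∑ i ∈ Finset.range (j + 1),
          (m i - l i) * (l (j + 1) - m j) ∧ 0 < b := by
  obtain ⟨k, rfl⟩ : ∃ k, n = k + 2 := ⟨n - 2, by omega⟩
  have hn1 : k + 2 - 1 = k + 1 := rfl
  have hn2 : k + 2 - 2 = k := rfl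
  rw [hn1] at hQ hinter ha ⊢
  rw [hn2] at hRdeg
  -- coefficient of P at k
  have hPc : P.coeff k = ∑ j ∈ Finset.range (k+2), ∑ i ∈ Finset.range j, l i * l j := by
    rw [hP]; exact coeff2 l k
  -- coefficient of Q at k
  have hQc : Q.coeff k = -∑ i ∈ Finset.range (k+1), m i := by
    rw [hQ]; exact coeff1 m k
  -- coefficient of X * Q at k
  set m' : ℕ → ℝ := fun i => if i < k + 1 then m i else 0 with hm'
  have hXQ : (X * Q).coeff k = ∑ j ∈ Finset.range (k+1), ∑ i ∈ Finset.range j, m i * m j := by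
    have h1 : X * Q = ∏ i ∈ Finset.range (k+2), (X - C (m' i)) := by
      rw [Finset.prod_range_succ, hQ, mul_comm]
      congr 1
      · exact Finset.prod_congr rfl fun i hi => by
          simp [hm', Finset.mem_range.mp hi, Nat.le_of_lt_succ (Finset.mem_range.mp hi)]
      · simp [hm']
    rw [h1, coeff2,
      Finset.sum_range_succ (f := fun j => ∑ i ∈ Finset.range j, m' i * m' j) (n := k+1)]
    have h2 : ∑ i ∈ Finset.range (k+1), m' i * m' (k+1) = 0 := by
      simp [hm']
    rw [h2, add_zero]
    refine Finset.sum_congr rfl fun j hj => Finset.sum_congr rfl fun i hi => ?_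
    have hj' := Finset.mem_range.mp hj
    have hi' := Finset.mem_range.mp hi
    simp [hm', hi'.trans hj', hj', Nat.le_of_lt_succ hj', Nat.le_of_lt_succ (hi'.trans hj')]
  -- R coefficient
  have hRc : R.coeff k = 1 := by
    have := hR.coeff_natDegree
    rwa [hRdeg] at this
  -- extract b
  have hco := congrArg (fun p : Polynomial ℝ => p.coeff k) hdecomp
  simp only [coeff_sub, sub_mul, coeff_C_mul, hRc, mul_one, hPc, hQc, hXQ] at hco
  have hb : b = (∑ j ∈ Finset.range (k+1), ∑ i ∈ Finset.range j, m i * m j)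
      + a * (∑ i ∈ Finset.range (k+1), m i)
      - ∑ j ∈ Finset.range (k+2), ∑ i ∈ Finset.range j, l i * l j := by
    linarith [hco]
  have hbval : b = ∑ j ∈ Finset.range (k+1), ∑ i ∈ Finset.range (j+1),
      (m i - l i) * (l (j+1) - m j) := by
    rw [key l m (k+1), hb, ha]
  refine ⟨hbval, ?_⟩
  rw [hbval]
  apply Finset.sum_pos
  · intro j hj
    have hj' : j < k + 1 := Finset.mem_range.mp hj
    apply Finset.sum_pos
    · intro i hi
      have hi' : i < j + 1 := Finset.mem_range.mp hi
      have h1 := hinter i (by omega)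
      have h2 := hinter j (by omega)
      exact mul_pos (by linarith [h1.1]) (by linarith [h2.2])
    · exact Finset.nonempty_range_add_one
  · exact Finset.nonempty_range_add_one
end

section
/- Let P and Q be monic real polynomials with deg P = deg Q + 1. Then Q/P admits a J-fraction representation 1/(x − a_0 − b_0²/(x − a_1 − b_1²/(... − b_{N−1}²/(x − a_N)))) with real a_k and positive b_j if and only if P and Q have only real simple zeros and the zeros of P and Q strictly interlace. -/
open Polynomial

/-- Denominator polynomials of the J-fraction with diagonal coefficients `a k`
    and squared off-diagonal coefficients `c k = b_k²`:
    `P_{-1} = 0`, `P_0 = 1`, `P_{k+1} = (x - a_k) P_k - b_{k-1}² P_{k-1}`, `b_{-1} = 1`. -/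
noncomputable def jden (a c : ℕ → ℝ) : ℕ → Polynomial ℝ
  | 0 => 1
  | 1 => X - C (a 0)
  | (k + 2) => (X - C (a (k + 1))) * jden a c (k + 1) - C (c k) * jden a c k

/-- Numerator polynomials of the J-fraction:
    `Q_{-1} = -1`, `Q_0 = 0`, `Q_{k+1} = (x - a_k) Q_k - b_{k-1}² Q_{k-1}`, `b_{-1} = 1`. -/
noncomputable def jnum (a c : ℕ → ℝ) : ℕ → Polynomial ℝ
  | 0 => 0
  | 1 => 1
  | (k + 2) => (X - C (a (k + 1))) * jnum a c (k + 1) - C (c k) * jnum a c k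

open Finset

lemma prod_neg_sign {s : Finset ℕ} {f : ℕ → ℝ} (h : ∀ i ∈ s, f i < 0) :
    0 < (-1 : ℝ) ^ s.card * ∏ i ∈ s, f i := by
  induction s using Finset.induction with
  | empty => simp
  | @insert a s hx ih =>
    rw [Finset.prod_insert hx, Finset.card_insert_of_notMem hx, pow_succ]
    have h1 := ih (fun i hi => h i (Finset.mem_insert_of_mem hi))
    have h2 := h a (Finset.mem_insert_self a s)
    nlinarith

lemma poly_ivt {p : ℝ[X]} {x y : ℝ} (hxy : x < y) (hx : p.eval x * p.eval y < 0) :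
    ∃ z, x < z ∧ z < y ∧ p.eval z = 0 := by
  rcases mul_neg_iff.1 hx with ⟨h1, h2⟩ | ⟨h1, h2⟩
  · obtain ⟨z, hz, hz0⟩ := intermediate_value_Ioo' hxy.le p.continuousOn
      (show (0:ℝ) ∈ Set.Ioo (p.eval y) (p.eval x) from ⟨h2, h1⟩)
    exact ⟨z, hz.1, hz.2, hz0⟩
  · obtain ⟨z, hz, hz0⟩ := intermediate_value_Ioo hxy.le p.continuousOn
      (show (0:ℝ) ∈ Set.Ioo (p.eval x) (p.eval y) from ⟨h1, h2⟩)
    exact ⟨z, hz.1, hz.2, hz0⟩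

lemma fact_lemma {p : ℝ[X]} {n : ℕ} {r : ℕ → ℝ} (hp : p ≠ 0) (hd : p.natDegree ≤ n)
    (hmono : ∀ i j, i < j → j < n → r i < r j)
    (hroots : ∀ i < n, p.eval (r i) = 0) :
    p.natDegree = n ∧ p = C p.leadingCoeff * ∏ i ∈ Finset.range n, (X - C (r i)) := by
  have hinj : Set.InjOn r (Finset.range n) := by
    intro i hi j hj hij
    simp only [Finset.coe_range, Set.mem_Iio] at hi hj
    rcases lt_trichotomy i j with h | h | h
    · exact absurd hij (hmono i j h hj).ne
    · exact h
    · exact absurd hij.symm (hmono j i h hi).ne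
  set F : Finset ℝ := (Finset.range n).image r with hF
  have hcardF : F.card = n := by rw [hF, Finset.card_image_of_injOn hinj, Finset.card_range]
  have hle : F.val ≤ p.roots := by
    rw [Multiset.le_iff_subset F.nodup]
    intro x hx
    obtain ⟨i, hi, rfl⟩ := Finset.mem_image.1 (show x ∈ (Finset.range n).image r from hx)
    exact (Polynomial.mem_roots hp).2 (hroots i (Finset.mem_range.1 hi))
  have hcard : n ≤ Multiset.card p.roots := by
    have := Multiset.card_le_card hle
    simpa [hcardF] using this
  have hnd : p.natDegree = n :=
    le_antisymm hd (le_trans hcard (Polynomial.card_roots' p))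
  have hcards : Multiset.card p.roots = p.natDegree :=
    le_antisymm (Polynomial.card_roots' p) (hnd ▸ hcard)
  have hsp : Splits p := (Polynomial.splits_iff_card_roots).2 hcards
  have heq := hsp.eq_prod_roots
  have hrootsEq : p.roots = F.val :=
    (Multiset.eq_of_le_of_card_le hle
      (by rw [← Finset.card_def, hcardF, hcards, hnd])).symm
  refine ⟨hnd, ?_⟩
  have hconv : (Multiset.map (fun a => X - C a) p.roots).prod
      = ∏ i ∈ Finset.range n, (X - C (r i)) := by
    rw [hrootsEq, ← Finset.prod_eq_multiset_prod, hF,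
      Finset.prod_image (fun i hi j hj => hinj hi hj)]
  conv_lhs => rw [heq]
  rw [hconv]

lemma prod_eval_sign {n k : ℕ} {m : ℕ → ℝ} {t : ℝ} (hk : k ≤ n)
    (hlow : ∀ i < k, m i < t) (hhigh : ∀ i, k ≤ i → i < n → t < m i) :
    0 < (-1:ℝ)^(n-k) * Polynomial.eval t (∏ i ∈ Finset.range n, (X - C (m i))) := by
  rw [Polynomial.eval_prod]
  simp only [Polynomial.eval_sub, Polynomial.eval_X, Polynomial.eval_C]
  rw [← Finset.prod_range_mul_prod_Ico _ hk]
  have h1 : 0 < ∏ i ∈ Finset.range k, (t - m i) :=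
    Finset.prod_pos fun i hi => sub_pos.2 (hlow i (Finset.mem_range.1 hi))
  have h2 : 0 < (-1:ℝ)^(n-k) * ∏ i ∈ Finset.Ico k n, (t - m i) := by
    have := prod_neg_sign (s := Finset.Ico k n) (f := fun i => t - m i)
      (fun i hi => sub_neg.2 (hhigh i (Finset.mem_Ico.1 hi).1 (Finset.mem_Ico.1 hi).2))
    rwa [Nat.card_Ico] at this
  calc (0:ℝ) < ((-1:ℝ)^(n-k) * ∏ i ∈ Finset.Ico k n, (t - m i)) *
      ∏ i ∈ Finset.range k, (t - m i) := mul_pos h2 h1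
    _ = (-1:ℝ)^(n-k) * ((∏ i ∈ Finset.range k, (t - m i)) *
        ∏ i ∈ Finset.Ico k n, (t - m i)) := by ring

lemma adj_mono {f : ℕ → ℝ} {n : ℕ} (h : ∀ i < n, f i < f (i+1)) :
    ∀ i j, i < j → j ≤ n → f i < f j := by
  intro i j hij hjn
  induction j with
  | zero => omega
  | succ j ih =>
    rcases Nat.lt_or_ge i j with hij' | hij'
    · exact (ih hij' (by omega)).trans (h j (by omega))
    · have : i = j := by omega
      subst this
      exact h i (by omega)

lemma prod_monic (n : ℕ) (m : ℕ → ℝ) :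
    (∏ i ∈ Finset.range n, (X - C (m i))).Monic :=
  monic_prod_of_monic _ _ fun i _ => monic_X_sub_C (m i)

lemma prod_natdeg (n : ℕ) (m : ℕ → ℝ) :
    (∏ i ∈ Finset.range n, (X - C (m i))).natDegree = n := by
  rw [Polynomial.natDegree_prod_of_monic _ _ fun i _ => monic_X_sub_C (m i)]
  simp [Polynomial.natDegree_X_sub_C]

lemma prod_root_eval {n : ℕ} {m : ℕ → ℝ} {i : ℕ} (hi : i < n) :
    Polynomial.eval (m i) (∏ j ∈ Finset.range n, (X - C (m j))) = 0 := by
  rw [Polynomial.eval_prod]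
  exact Finset.prod_eq_zero (Finset.mem_range.2 hi) (by simp)
lemma step2 {N : ℕ} {P Q : ℝ[X]} {l m : ℕ → ℝ}
    (hP : P = ∏ i ∈ Finset.range (N+2), (X - C (l i)))
    (hQ : Q = ∏ i ∈ Finset.range (N+1), (X - C (m i)))
    (hint : ∀ i < N+1, l i < m i ∧ m i < l (i+1)) :
    ∃ (a0 c0 : ℝ) (R : ℝ[X]) (nn : ℕ → ℝ), 0 < c0 ∧
      P = (X - C a0) * Q - C c0 * R ∧
      R = ∏ i ∈ Finset.range N, (X - C (nn i)) ∧
      ∀ i < N, m i < nn i ∧ nn i < m (i+1) := by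
  have hlmono : ∀ i j, i < j → j ≤ N+1 → l i < l j :=
    adj_mono fun i hi => ((hint i hi).1).trans (hint i hi).2
  have hmadj : ∀ i < N, m i < m (i+1) := fun i hi =>
    ((hint i (by omega)).2).trans (hint (i+1) (by omega)).1
  have hmmono : ∀ i j, i < j → j ≤ N → m i < m j := adj_mono hmadj
  have signP : ∀ i < N+1, 0 < (-1:ℝ)^(N+1-i) * P.eval (m i) := by
    intro i hi
    have := prod_eval_sign (n := N+2) (k := i+1) (m := l) (t := m i) (by omega)
      (by
        intro j hj
        rcases Nat.lt_or_ge j i with h | h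
        · exact (hlmono j i h (by omega)).trans (hint i hi).1
        · have : j = i := by omega
          subst this; exact (hint j hi).1)
      (by
        intro j hj1 hj2
        rcases Nat.lt_or_ge (i+1) j with h | h
        · exact ((hint i hi).2).trans (hlmono (i+1) j h (by omega))
        · have : j = i+1 := by omega
          subst this; exact (hint i hi).2)
    rw [show N+2-(i+1) = N+1-i from by omega] at this
    rwa [← hP] at this
  have hQmon : Q.Monic := hQ ▸ prod_monic _ _
  have hPmon : P.Monic := hP ▸ prod_monic _ _
  have hQdeg : Q.natDegree = N+1 := by rw [hQ]; exact prod_natdeg _ _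
  have hPdeg : P.natDegree = N+2 := by rw [hP]; exact prod_natdeg _ _
  have hQtop : Q.coeff (N+1) = 1 := by
    have := hQmon.coeff_natDegree; rwa [hQdeg] at this
  have hPtop : P.coeff (N+2) = 1 := by
    have := hPmon.coeff_natDegree; rwa [hPdeg] at this
  set a0 : ℝ := Q.coeff N - P.coeff (N+1) with ha0
  set S : ℝ[X] := (X - C a0) * Q - P with hS
  have hScoeff : ∀ k, S.coeff (k+1) = Q.coeff k - a0 * Q.coeff (k+1) - P.coeff (k+1) := by
    intro k
    rw [hS, Polynomial.coeff_sub, sub_mul, Polynomial.coeff_sub,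
      Polynomial.coeff_X_mul, Polynomial.coeff_C_mul]
  have hSdeg : S.natDegree ≤ N := by
    rw [Polynomial.natDegree_le_iff_coeff_eq_zero]
    intro k hk
    obtain ⟨k, rfl⟩ : ∃ k', k = k'+1 := ⟨k-1, by omega⟩
    rw [hScoeff]
    rcases Nat.lt_trichotomy k (N+1) with h | h | h
    · have hk' : k = N := by omega
      subst hk'
      rw [hQtop, ha0]; ring
    · subst h
      rw [hQtop, hPtop,
        Polynomial.coeff_eq_zero_of_natDegree_lt (by omega : Q.natDegree < N+1+1)]
      ring
    · rw [Polynomial.coeff_eq_zero_of_natDegree_lt (by omega : Q.natDegree < k),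
        Polynomial.coeff_eq_zero_of_natDegree_lt (by omega : Q.natDegree < k+1),
        Polynomial.coeff_eq_zero_of_natDegree_lt (by omega : P.natDegree < k+1)]
      ring
  have hQe : ∀ i < N+1, Q.eval (m i) = 0 := fun i hi => hQ ▸ prod_root_eval hi
  have hSe : ∀ i < N+1, S.eval (m i) = - P.eval (m i) := by
    intro i hi
    rw [hS]; simp [hQe i hi]
  have signS : ∀ i < N+1, 0 < (-1:ℝ)^(N-i) * S.eval (m i) := by
    intro i hi
    have h := signP i hi
    rw [show N+1-i = (N-i)+1 from by omega] at h
    calc (0:ℝ) < _ := h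
      _ = (-1:ℝ)^(N-i) * S.eval (m i) := by rw [hSe i hi]; ring
  have hgap : ∀ i < N, ∃ z, m i < z ∧ z < m (i+1) ∧ S.eval z = 0 := by
    intro i hi
    apply poly_ivt (hmadj i hi)
    have s1 := signS i (by omega)
    have s2 := signS (i+1) (by omega)
    rw [show N-i = (N-(i+1))+1 from by omega] at s1
    set e := N-(i+1)
    have hmul := mul_pos s1 s2
    have h1 : (-1:ℝ)^(e+1) * (-1)^e = -1 := by
      rw [← pow_add, show e+1+e = 2*e+1 from by omega, pow_succ, pow_mul]
      norm_num
    have heq : ((-1:ℝ)^(e+1) * S.eval (m i)) * ((-1)^e * S.eval (m (i+1)))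
        = -(S.eval (m i) * S.eval (m (i+1))) := by
      rw [mul_mul_mul_comm, h1]; ring
    rw [heq] at hmul; linarith
  have hex : ∀ i, ∃ z, i < N → (m i < z ∧ z < m (i+1) ∧ S.eval z = 0) := by
    intro i; by_cases h : i < N
    · obtain ⟨z, h1, h2, h3⟩ := hgap i h
      exact ⟨z, fun _ => ⟨h1, h2, h3⟩⟩
    · exact ⟨0, fun hc => absurd hc h⟩
  choose nn hnn using hex
  have hS0 : S ≠ 0 := by
    intro h
    have := signS N (by omega)
    rw [h] at this; simp at this
  have hfact := fact_lemma (n := N) (r := nn) hS0 hSdeg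
    (by
      intro i j hij hj
      have h1 : nn i < m (i+1) := (hnn i (by omega)).2.1
      have h2 : m j < nn j := (hnn j hj).1
      rcases Nat.lt_or_ge (i+1) j with h | h
      · exact h1.trans ((hmmono (i+1) j h (by omega)).trans h2)
      · have : j = i+1 := by omega
        subst this; exact h1.trans h2)
    (fun i hi => (hnn i hi).2.2)
  set c0 := S.leadingCoeff with hc0
  have hprodpos : 0 < Polynomial.eval (m N) (∏ i ∈ Finset.range N, (X - C (nn i))) := by
    have := prod_eval_sign (n := N) (k := N) (m := nn) (t := m N) le_rfl
      (by
        intro i hi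
        have h1 : nn i < m (i+1) := (hnn i hi).2.1
        rcases Nat.lt_or_ge (i+1) N with h | h
        · exact h1.trans (hmmono (i+1) N h le_rfl)
        · have : i+1 = N := by omega
          subst this; exact h1)
      (by omega)
    simpa using this
  have hSN : 0 < S.eval (m N) := by
    have := signS N (by omega)
    simpa using this
  have hc0pos : 0 < c0 := by
    have hev : S.eval (m N) = c0 * Polynomial.eval (m N)
        (∏ i ∈ Finset.range N, (X - C (nn i))) := by
      conv_lhs => rw [hfact.2]
      simp
    rw [hev] at hSN
    rcases mul_pos_iff.1 hSN with ⟨h1, _⟩ | ⟨_, h2⟩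
    · exact h1
    · linarith
  refine ⟨a0, c0, ∏ i ∈ Finset.range N, (X - C (nn i)), nn, hc0pos, ?_, rfl,
    fun i hi => ⟨(hnn i hi).1, (hnn i hi).2.1⟩⟩
  have hSfac := hfact.2
  linear_combination hS - hSfac
lemma roots_dvd {p : ℝ[X]} (hp : p ≠ 0) {n : ℕ} {r : ℕ → ℝ}
    (hmono : ∀ i j, i < j → j < n → r i < r j)
    (hroots : ∀ i < n, p.eval (r i) = 0) :
    (∏ i ∈ Finset.range n, (X - C (r i))) ∣ p := by
  have hinj : Set.InjOn r (Finset.range n) := by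
    intro i hi j hj hij
    simp only [Finset.coe_range, Set.mem_Iio] at hi hj
    rcases lt_trichotomy i j with h | h | h
    · exact absurd hij (hmono i j h hj).ne
    · exact h
    · exact absurd hij.symm (hmono j i h hi).ne
  set F : Finset ℝ := (Finset.range n).image r with hF
  have hle : F.val ≤ p.roots := by
    rw [Multiset.le_iff_subset F.nodup]
    intro x hx
    obtain ⟨i, hi, rfl⟩ := Finset.mem_image.1 (show x ∈ (Finset.range n).image r from hx)
    exact (Polynomial.mem_roots hp).2 (hroots i (Finset.mem_range.1 hi))
  have h1 : (∏ i ∈ Finset.range n, (X - C (r i)))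
      = (Multiset.map (fun a => X - C a) F.val).prod := by
    rw [← Finset.prod_eq_multiset_prod, hF,
      Finset.prod_image (fun i hi j hj => hinj hi hj)]
  rw [h1]
  exact dvd_trans (Multiset.prod_dvd_prod_of_le (Multiset.map_le_map hle))
    (Polynomial.prod_multiset_X_sub_C_dvd p)

lemma step1 {N : ℕ} {l m : ℕ → ℝ} {a0 c0 : ℝ} (hc0 : 0 < c0)
    (hint : ∀ i < N, l i < m i ∧ m i < l (i+1)) :
    ∃ l' : ℕ → ℝ,
      (X - C a0) * (∏ i ∈ Finset.range (N+1), (X - C (l i)))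
        - C c0 * (∏ i ∈ Finset.range N, (X - C (m i)))
        = ∏ i ∈ Finset.range (N+2), (X - C (l' i)) ∧
      ∀ i < N+1, l' i < l i ∧ l i < l' (i+1) := by
  set Q : ℝ[X] := ∏ i ∈ Finset.range (N+1), (X - C (l i)) with hQ
  set R : ℝ[X] := ∏ i ∈ Finset.range N, (X - C (m i)) with hR
  set P : ℝ[X] := (X - C a0) * Q - C c0 * R with hP
  have hlmono : ∀ i j, i < j → j ≤ N → l i < l j :=
    adj_mono fun i hi => ((hint i hi).1).trans (hint i hi).2
  have hmmono : ∀ i j, i < j → j < N → m i < m j := by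
    intro i j hij hj
    exact adj_mono (n := N-1)
      (fun i hi => ((hint i (by omega)).2).trans (hint (i+1) (by omega)).1)
      i j hij (by omega)
  have signR : ∀ i < N+1, 0 < (-1:ℝ)^(N-i) * R.eval (l i) := by
    intro i hi
    have := prod_eval_sign (n := N) (k := min i N) (m := m) (t := l i) (min_le_right _ _)
      (by
        intro j hj
        have hj' : j < i := by omega
        have hjN : j < N := by omega
        calc m j < l (j+1) := (hint j hjN).2
          _ ≤ l i := by
            rcases Nat.lt_or_ge (j+1) i with h | h
            · exact (hlmono (j+1) i h (by omega)).le
            · have : j+1 = i := by omega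
              subst this; rfl)
      (by
        intro j hj1 hj2
        have hij : i ≤ j := by omega
        calc l i ≤ l j := by
              rcases Nat.lt_or_ge i j with h | h
              · exact (hlmono i j h (by omega)).le
              · have : i = j := by omega
                subst this; rfl
          _ < m j := (hint j hj2).1)
    rwa [show N - min i N = N - i from by omega] at this
  have hQe : ∀ i < N+1, Q.eval (l i) = 0 := fun i hi => prod_root_eval hi
  have hPe : ∀ i < N+1, P.eval (l i) = -c0 * R.eval (l i) := by
    intro i hi
    rw [hP]; simp [hQe i hi]
  have signP : ∀ i < N+1, 0 < (-1:ℝ)^(N+1-i) * P.eval (l i) := by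
    intro i hi
    have h := signR i hi
    have h2 : (0:ℝ) < c0 * ((-1:ℝ)^(N-i) * R.eval (l i)) := mul_pos hc0 h
    calc (0:ℝ) < c0 * ((-1:ℝ)^(N-i) * R.eval (l i)) := h2
      _ = (-1:ℝ)^(N-i+1) * (-c0 * R.eval (l i)) := by ring
      _ = (-1:ℝ)^(N+1-i) * P.eval (l i) := by
          rw [hPe i hi, show N+1-i = N-i+1 from by omega]
  have hgap : ∀ i < N, ∃ z, l i < z ∧ z < l (i+1) ∧ P.eval z = 0 := by
    intro i hi
    apply poly_ivt (((hint i hi).1).trans (hint i hi).2)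
    have s1 := signP i (by omega)
    have s2 := signP (i+1) (by omega)
    rw [show N+1-i = (N+1-(i+1))+1 from by omega] at s1
    set e := N+1-(i+1)
    have hmul := mul_pos s1 s2
    have h1 : (-1:ℝ)^(e+1) * (-1)^e = -1 := by
      rw [← pow_add, show e+1+e = 2*e+1 from by omega, pow_succ, pow_mul]
      norm_num
    have heq : ((-1:ℝ)^(e+1) * P.eval (l i)) * ((-1)^e * P.eval (l (i+1)))
        = -(P.eval (l i) * P.eval (l (i+1))) := by
      rw [mul_mul_mul_comm, h1]; ring
    rw [heq] at hmul; linarith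
  -- P is monic of degree N+2
  have hQmon : Q.Monic := prod_monic _ _
  have hQdeg : Q.natDegree = N+1 := prod_natdeg _ _
  have hRdeg : R.natDegree = N := prod_natdeg _ _
  have hXQmon : ((X - C a0) * Q).Monic := (monic_X_sub_C a0).mul hQmon
  have hXQdeg : ((X - C a0) * Q).natDegree = N+2 := by
    rw [(monic_X_sub_C a0).natDegree_mul hQmon, Polynomial.natDegree_X_sub_C, hQdeg]
    omega
  have hPdegle : P.natDegree ≤ N+2 := by
    refine le_trans (Polynomial.natDegree_sub_le _ _) ?_
    rw [hXQdeg]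
    refine max_le le_rfl (le_trans (Polynomial.natDegree_mul_le) ?_)
    rw [Polynomial.natDegree_C, hRdeg]; omega
  have hPcoeff : P.coeff (N+2) = 1 := by
    rw [hP, Polynomial.coeff_sub]
    have h1 : ((X - C a0) * Q).coeff (N+2) = 1 := by
      have := hXQmon.coeff_natDegree; rwa [hXQdeg] at this
    have h2 : (C c0 * R).coeff (N+2) = 0 := by
      apply Polynomial.coeff_eq_zero_of_natDegree_lt
      refine lt_of_le_of_lt (Polynomial.natDegree_mul_le) ?_
      rw [Polynomial.natDegree_C, hRdeg]; omega
    rw [h1, h2]; ring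
  have hPmon : P.Monic :=
    Polynomial.monic_of_natDegree_le_of_coeff_eq_one _ hPdegle hPcoeff
  have hPdeg : P.natDegree = N+2 :=
    le_antisymm hPdegle (Polynomial.le_natDegree_of_ne_zero (by rw [hPcoeff]; norm_num))
  -- top root
  have htop : ∃ z, l N < z ∧ P.eval z = 0 := by
    have htend := Polynomial.tendsto_atTop_of_leadingCoeff_nonneg P
      (by rw [Polynomial.degree_eq_natDegree hPmon.ne_zero, hPdeg]; exact_mod_cast Nat.succ_pos _)
      (by rw [hPmon.leadingCoeff]; norm_num)
    have hev := (htend.eventually_ge_atTop 1).and (Filter.eventually_gt_atTop (l N))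
    obtain ⟨x, hx1, hx2⟩ := hev.exists
    have hPlN : P.eval (l N) < 0 := by
      have := signP N (by omega)
      rw [show N+1-N = 1 from by omega] at this
      simpa using this
    obtain ⟨z, hz1, _, hz3⟩ := poly_ivt hx2
      (mul_neg_of_neg_of_pos hPlN (by linarith))
    exact ⟨z, hz1, hz3⟩
  have hex : ∀ i, ∃ z, i < N+1 →
      (l i < z ∧ P.eval z = 0 ∧ (i < N → z < l (i+1))) := by
    intro i
    rcases Nat.lt_trichotomy i N with h | h | h
    · obtain ⟨z, h1, h2, h3⟩ := hgap i h
      exact ⟨z, fun _ => ⟨h1, h3, fun _ => h2⟩⟩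
    · subst h
      obtain ⟨z, h1, h2⟩ := htop
      exact ⟨z, fun _ => ⟨h1, h2, fun hc => absurd hc (lt_irrefl _)⟩⟩
    · exact ⟨0, fun hc => absurd hc (by omega)⟩
  choose rr hrr using hex
  have hrrmono : ∀ i j, i < j → j < N+1 → rr i < rr j := by
    intro i j hij hj
    have h1 : rr i < l (i+1) := (hrr i (by omega)).2.2 (by omega)
    have h2 : l j < rr j := (hrr j hj).1
    rcases Nat.lt_or_ge (i+1) j with h | h
    · exact h1.trans ((hlmono (i+1) j h (by omega)).trans h2)
    · have : j = i+1 := by omega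
      subst this; exact h1.trans h2
  set T : ℝ[X] := ∏ i ∈ Finset.range (N+1), (X - C (rr i)) with hT
  have hTdvd : T ∣ P := roots_dvd hPmon.ne_zero hrrmono (fun i hi => (hrr i hi).2.1)
  obtain ⟨G, hG⟩ := hTdvd
  have hTmon : T.Monic := prod_monic _ _
  have hTdeg : T.natDegree = N+1 := prod_natdeg _ _
  have hG0 : G ≠ 0 := by
    intro h; rw [h, mul_zero] at hG; exact hPmon.ne_zero hG
  have hGdeg : G.natDegree = 1 := by
    have := Polynomial.natDegree_mul hTmon.ne_zero hG0
    rw [← hG, hPdeg, hTdeg] at this; omega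
  have hGmon : G.Monic := by
    have := Polynomial.leadingCoeff_mul T G
    rw [← hG, hPmon.leadingCoeff, hTmon.leadingCoeff, one_mul] at this
    exact this.symm
  have hGX : G = X - C (-(G.coeff 0)) := by
    have h1 := Polynomial.eq_X_add_C_of_natDegree_le_one (hGdeg.le)
    have h2 : G.coeff 1 = 1 := by
      have := hGmon.coeff_natDegree; rwa [hGdeg] at this
    rw [h2] at h1
    rw [map_neg, sub_neg_eq_add]
    simpa using h1
  set r0 : ℝ := -(G.coeff 0) with hr0
  have hr0lt : r0 < l 0 := by
    have hsP := signP 0 (by omega)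
    have hsT : 0 < (-1:ℝ)^(N+1) * T.eval (l 0) := by
      have := prod_eval_sign (n := N+1) (k := 0) (m := rr) (t := l 0)
        (Nat.zero_le _) (by omega)
        (by
          intro j _ hj
          have h2 : l 0 ≤ l j := by
            rcases Nat.lt_or_ge 0 j with h | h
            · exact (hlmono 0 j h (by omega)).le
            · have : j = 0 := by omega
              subst this; rfl
          exact lt_of_le_of_lt h2 (hrr j hj).1)
      simpa using this
    have hPT : P.eval (l 0) = T.eval (l 0) * (l 0 - r0) := by
      rw [hG, Polynomial.eval_mul]
      congr 1
      rw [hGX]; simp [hr0]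
    rw [show N+1-0 = N+1 from rfl, hPT] at hsP
    nlinarith
  refine ⟨fun i => match i with | 0 => r0 | (i+1) => rr i, ?_, ?_⟩
  · show P = _
    rw [Finset.prod_range_succ']
    show P = (∏ i ∈ Finset.range (N+1), (X - C (rr i))) * (X - C r0)
    rw [hG, ← hT]
    congr 1
  · intro i hi
    match i with
    | 0 => exact ⟨hr0lt, (hrr 0 (by omega)).1⟩
    | (j+1) =>
      refine ⟨(hrr j (by omega)).2.2 (by omega), (hrr (j+1) hi).1⟩

private def shf (f : ℕ → ℝ) : ℕ → ℝ := fun n => f (n+1)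

lemma jnum_shift (a c : ℕ → ℝ) : ∀ k, jnum a c (k+1) = jden (shf a) (shf c) k
  | 0 => by simp [jnum, jden]
  | 1 => by simp [jnum, jden, shf]
  | (k+2) => by
    show jnum a c ((k+1)+2) = jden (shf a) (shf c) (k+2)
    rw [jnum, jden, jnum_shift a c (k+1), jnum_shift a c k]
    rfl

lemma jden_split (a c : ℕ → ℝ) : ∀ k, jden a c (k+2)
    = (X - C (a 0)) * jden (shf a) (shf c) (k+1)
      - C (c 0) * jden (shf (shf a)) (shf (shf c)) k
  | 0 => by
    simp only [jden, shf]
    ring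
  | 1 => by
    simp only [jden, shf]
    ring
  | (k+2) => by
    show jden a c ((k+2)+2) = _
    rw [jden, jden_split a c (k+1), jden_split a c k]
    have h1 : jden (shf a) (shf c) (k+3)
        = (X - C (a (k+3))) * jden (shf a) (shf c) (k+2)
          - C (c (k+2)) * jden (shf a) (shf c) (k+1) := by
      rw [show k+3 = (k+1)+2 from rfl, jden]; rfl
    have h2 : jden (shf (shf a)) (shf (shf c)) (k+2)
        = (X - C (a (k+3))) * jden (shf (shf a)) (shf (shf c)) (k+1)
          - C (c (k+2)) * jden (shf (shf a)) (shf (shf c)) k := by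
      rw [jden]; rfl
    rw [h1, h2]
    ring

lemma main1 : ∀ (N : ℕ) (a c : ℕ → ℝ), (∀ j, 0 < c j) →
    ∃ l m : ℕ → ℝ,
      jden a c (N+1) = ∏ i ∈ Finset.range (N+1), (X - C (l i)) ∧
      jden (shf a) (shf c) N = ∏ i ∈ Finset.range N, (X - C (m i)) ∧
      ∀ i < N, l i < m i ∧ m i < l (i+1) := by
  intro N
  induction N with
  | zero =>
    intro a c _
    exact ⟨fun _ => a 0, fun _ => 0, by simp [jden], by simp [jden],
      fun i hi => absurd hi (Nat.not_lt_zero i)⟩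
  | succ N ih =>
    intro a c hc
    obtain ⟨l, m, hQ, hR, hint⟩ := ih (shf a) (shf c) (fun j => hc (j+1))
    obtain ⟨l', hfac, hil⟩ := step1 (a0 := a 0) (hc 0) hint
    refine ⟨l', l, ?_, hQ, hil⟩
    rw [jden_split a c N, hQ, hR, hfac]

lemma main2 : ∀ (N : ℕ) (P Q : ℝ[X]) (l m : ℕ → ℝ),
    P = ∏ i ∈ Finset.range (N+1), (X - C (l i)) →
    Q = ∏ i ∈ Finset.range N, (X - C (m i)) →
    (∀ i < N, l i < m i ∧ m i < l (i+1)) →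
    ∃ a c : ℕ → ℝ, (∀ j, 0 < c j) ∧ P = jden a c (N+1) ∧ Q = jnum a c (N+1) := by
  intro N
  induction N with
  | zero =>
    intro P Q l m hP hQ _
    refine ⟨fun _ => l 0, fun _ => 1, fun _ => one_pos, ?_, ?_⟩
    · rw [hP]; simp [jden]
    · rw [hQ]; simp [jnum]
  | succ N ih =>
    intro P Q l m hP hQ hint
    obtain ⟨a0, c0, R, nn, hc0, hPQ, hRfac, hint'⟩ := step2 hP hQ hint
    obtain ⟨a', c', hc', hQ', hR'⟩ := ih Q R m nn hQ hRfac hint'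
    have hsha : shf (fun n => Nat.casesOn n a0 a') = a' := rfl
    have hshc : shf (fun n => Nat.casesOn n c0 c') = c' := rfl
    refine ⟨fun n => Nat.casesOn n a0 a', fun n => Nat.casesOn n c0 c', ?_, ?_, ?_⟩
    · intro j
      cases j with
      | zero => exact hc0
      | succ j => exact hc' j
    · rw [jden_split, hsha, hshc, ← hQ']
      have : jden (shf a') (shf c') N = R := by
        rw [← jnum_shift, ← hR']
      rw [this]
      exact hPQ
    · rw [jnum_shift, hsha, hshc, ← hQ']

/-- `Q/P` admits a J-fraction representation (i.e. `P` and `Q` are the denominator and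
    numerator polynomials of some J-fraction with real `a_k` and positive `b_j`,
    encoded via `c j = b_j² > 0`) iff `P` and `Q` have only real simple zeros and the
    zeros strictly interlace. -/
theorem stmt_7 (P Q : Polynomial ℝ) (hPm : P.Monic) (hQm : Q.Monic)
    (hdeg : P.natDegree = Q.natDegree + 1) :
    (∃ a c : ℕ → ℝ, (∀ j, 0 < c j) ∧
        P = jden a c (Q.natDegree + 1) ∧ Q = jnum a c (Q.natDegree + 1)) ↔
      (∃ l m : ℕ → ℝ,
        P = ∏ i ∈ Finset.range P.natDegree, (X - C (l i)) ∧
        Q = ∏ i ∈ Finset.range Q.natDegree, (X - C (m i)) ∧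
        (∀ i < Q.natDegree, l i < m i ∧ m i < l (i + 1))) := by
  constructor
  · rintro ⟨a, c, hc, hPj, hQj⟩
    obtain ⟨l, m, h1, h2, h3⟩ := main1 Q.natDegree a c hc
    refine ⟨l, m, ?_, ?_, h3⟩
    · rw [hdeg, hPj, h1]
    · conv_lhs => rw [hQj, jnum_shift, h2]
  · rintro ⟨l, m, hPf, hQf, hint⟩
    exact main2 Q.natDegree P Q l m (by rw [← hdeg]; exact hPf) hQf hint
end

section
/- Let P ∈ ℝ[x] and Q ∈ ℝ[x] with deg P = deg Q + 1, such that P and Q have only real zeros and the zeros of P and Q interlace, so Q/P admits a J-fraction with coefficients a_0,...,a_N and b_0,...,b_{N−1}. Then the J-fraction is palindromic (a_i = a_{N−i} and b_j = b_{N−1−j}) if and only if P divides Q² − b_0² b_1² ⋯ b_{N−1}². -/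
open Polynomial

open Polynomial

lemma jden_rec (a c : ℕ → ℝ) (k : ℕ) :
    jden a c (k + 2) = (X - C (a (k + 1))) * jden a c (k + 1) - C (c k) * jden a c k := by
  rw [jden]

lemma jnum_rec (a c : ℕ → ℝ) (k : ℕ) :
    jnum a c (k + 2) = (X - C (a (k + 1))) * jnum a c (k + 1) - C (c k) * jnum a c k := by
  rw [jnum]

lemma jden_ext (a c a' c' : ℕ → ℝ) : ∀ n, (∀ i, i < n → a i = a' i) →
    (∀ j, j + 1 < n → c j = c' j) → jden a c n = jden a' c' n := by
  intro n
  induction n using Nat.strong_induction_on with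
  | _ n ih =>
    match n with
    | 0 => intros; rfl
    | 1 => intro ha _; simp [jden, ha 0 (by omega)]
    | (k+2) =>
      intro ha hcc
      rw [jden, jden, ih (k+1) (by omega) (fun i hi => ha i (by omega))
          (fun j hj => hcc j (by omega)),
        ih k (by omega) (fun i hi => ha i (by omega)) (fun j hj => hcc j (by omega)),
        ha (k+1) (by omega), hcc k (by omega)]

lemma jden_monic (a c : ℕ → ℝ) : ∀ n, (jden a c n).Monic ∧ (jden a c n).natDegree = n := by
  intro n
  induction n using Nat.strong_induction_on with
  | _ n ih =>
    match n with
    | 0 => exact ⟨monic_one, natDegree_one⟩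
    | 1 => exact ⟨monic_X_sub_C _, natDegree_X_sub_C _⟩
    | (k+2) =>
      obtain ⟨m1, d1⟩ := ih (k+1) (by omega)
      obtain ⟨m0, d0⟩ := ih k (by omega)
      have hm : ((X - C (a (k+1))) * jden a c (k+1)).Monic := (monic_X_sub_C _).mul m1
      have hd : ((X - C (a (k+1))) * jden a c (k+1)).natDegree = k + 2 := by
        rw [natDegree_mul (monic_X_sub_C _).ne_zero m1.ne_zero, natDegree_X_sub_C, d1]; omega
      have h1 : (C (c k) * jden a c k).degree ≤ (k : WithBot ℕ) := by
        refine le_trans (degree_mul_le _ _) ?_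
        refine le_trans (add_le_add degree_C_le (degree_le_natDegree.trans_eq (by rw [d0]))) ?_
        simp
      have hlt : (-(C (c k) * jden a c k)).degree < ((X - C (a (k+1))) * jden a c (k+1)).degree := by
        rw [degree_neg, degree_eq_natDegree hm.ne_zero, hd]
        exact lt_of_le_of_lt h1 (by exact_mod_cast (by omega : k < k + 2))
      constructor
      · rw [jden, sub_eq_add_neg]; exact hm.add_of_left hlt
      · rw [jden, sub_eq_add_neg]
        have := degree_add_eq_left_of_degree_lt hlt
        rw [degree_eq_natDegree hm.ne_zero, hd] at this
        exact natDegree_eq_of_degree_eq_some this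

lemma jnum_eq_jden_shift (a c : ℕ → ℝ) : ∀ n,
    jnum a c (n + 1) = jden (fun i => a (i + 1)) (fun j => c (j + 1)) n := by
  intro n
  induction n using Nat.strong_induction_on with
  | _ n ih =>
    match n with
    | 0 => simp [jnum, jden]
    | 1 => simp [jnum, jden]
    | (k+2) =>
      rw [show k + 2 + 1 = (k + 1) + 2 by rfl, jnum, jden,
        ih (k+1) (by omega), ih k (by omega)]

lemma jden_first_row (a c : ℕ → ℝ) : ∀ n,
    jden a c (n + 2) = (X - C (a 0)) * jden (fun i => a (i + 1)) (fun j => c (j + 1)) (n + 1)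
      - C (c 0) * jden (fun i => a (i + 2)) (fun j => c (j + 2)) n := by
  intro n
  induction n using Nat.strong_induction_on with
  | _ n ih =>
    match n with
    | 0 => simp [jden]; ring
    | 1 => simp [jden]; ring
    | (k+2) =>
      rw [show k + 2 + 2 = (k + 2) + 2 by rfl]
      rw [jden_rec a c (k+2), ih (k+1) (by omega), ih k (by omega),
        jden_rec (fun i => a (i+1)) (fun j => c (j+1)) (k+1),
        jden_rec (fun i => a (i+2)) (fun j => c (j+2)) k]
      ring

lemma jden_rev (a c : ℕ → ℝ) : ∀ n,
    jden a c n = jden (fun i => a (n - 1 - i)) (fun j => c (n - 2 - j)) n := by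
  intro n
  induction n using Nat.strong_induction_on with
  | _ n ih =>
    generalize ha' : (fun i => a (n - 1 - i)) = a'
    generalize hc' : (fun j => c (n - 2 - j)) = c'
    match n with
    | 0 => rfl
    | 1 => rw [← ha']; simp [jden]
    | (k+2) =>
      rw [jden_first_row a' c' k, jden_rec]
      have e1 : a' 0 = a (k + 1) := by rw [← ha']; exact congrArg a (by omega)
      have e2 : c' 0 = c k := by rw [← hc']; exact congrArg c (by omega)
      have e3 : jden (fun i => a' (i + 1)) (fun j => c' (j + 1)) (k + 1)
          = jden a c (k + 1) := by
        rw [ih (k+1) (by omega)]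
        apply jden_ext
        · intro i hi; rw [← ha']; exact congrArg a (by omega)
        · intro j hj; rw [← hc']; exact congrArg c (by omega)
      have e4 : jden (fun i => a' (i + 2)) (fun j => c' (j + 2)) k
          = jden a c k := by
        rw [ih k (by omega)]
        apply jden_ext
        · intro i hi; rw [← ha']; exact congrArg a (by omega)
        · intro j hj; rw [← hc']; exact congrArg c (by omega)
      rw [e1, e2, e3, e4]

lemma jdet (a c : ℕ → ℝ) : ∀ n,
    jnum a c (n + 1) * jden a c n - jnum a c n * jden a c (n + 1)
      = C (∏ j ∈ Finset.range n, c j) := by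
  intro n
  induction n with
  | zero => simp [jnum, jden]
  | succ k ih =>
    match k, ih with
    | 0, _ => simp [jnum, jden]
    | (m+1), ih =>
      rw [show m + 1 + 1 = m + 2 by rfl, jnum_rec a c (m+1), jden_rec a c (m+1),
        Finset.prod_range_succ, map_mul, ← ih]
      ring

lemma jden_unique (a c a' c' : ℕ → ℝ) (hc : ∀ j, c j ≠ 0) : ∀ n,
    jden a c (n + 1) = jden a' c' (n + 1) → jden a c n = jden a' c' n →
    (∀ i ≤ n, a i = a' i) ∧ (∀ j < n, c j = c' j) := by
  intro n
  induction n with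
  | zero =>
    intro h1 _
    have : X - C (a 0) = X - C (a' 0) := h1
    have h0 : a 0 = a' 0 := by
      have hC : C (a 0) = C (a' 0) := by linear_combination -this
      exact C_injective hC
    refine ⟨fun i hi => ?_, fun j hj => absurd hj (by omega)⟩
    interval_cases i; exact h0
  | succ n ih =>
    intro h2 h1
    rw [jden_rec a c n, jden_rec a' c' n, h1] at h2
    have key : (C (a' (n+1)) - C (a (n+1))) * jden a' c' (n + 1)
        = C (c n) * jden a c n - C (c' n) * jden a' c' n := by
      linear_combination h2
    have hmono := jden_monic a' c' (n+1)
    have hco := congrArg (fun p => Polynomial.coeff p (n+1)) key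
    simp only [coeff_sub, coeff_C_mul, sub_mul] at hco
    have z1 : (jden a c n).coeff (n+1) = 0 :=
      coeff_eq_zero_of_natDegree_lt (by rw [(jden_monic a c n).2]; omega)
    have z2 : (jden a' c' n).coeff (n+1) = 0 :=
      coeff_eq_zero_of_natDegree_lt (by rw [(jden_monic a' c' n).2]; omega)
    have hP1 : (jden a' c' (n+1)).coeff (n+1) = 1 := by
      have := hmono.1.coeff_natDegree
      rwa [hmono.2] at this
    rw [z1, z2, hP1] at hco
    simp at hco
    have ha : a (n+1) = a' (n+1) := by linarith [hco]
    rw [ha, sub_self, zero_mul] at key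
    have key2 : C (c n) * jden a c n = C (c' n) * jden a' c' n := by
      linear_combination -key
    have hcn : c n = c' n := by
      have := congrArg Polynomial.leadingCoeff key2
      rwa [leadingCoeff_mul, leadingCoeff_mul, leadingCoeff_C, leadingCoeff_C,
        (jden_monic a c n).1.leadingCoeff, (jden_monic a' c' n).1.leadingCoeff,
        mul_one, mul_one] at this
    rw [hcn] at key2
    have h0 : jden a c n = jden a' c' n :=
      mul_left_cancel₀ (by exact_mod_cast (C_ne_zero.mpr (hcn ▸ hc n))) key2
    obtain ⟨ihA, ihC⟩ := ih h1 h0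
    constructor
    · intro i hi
      rcases Nat.lt_or_ge i (n+1) with h | h
      · exact ihA i (by omega)
      · have : i = n + 1 := by omega
        rw [this]; exact ha
    · intro j hj
      rcases Nat.lt_or_ge j n with h | h
      · exact ihC j h
      · have : j = n := by omega
        rw [this]; exact hcn

/-- **Palindromic J-fractions.** Let `Q/P` be the J-fraction with coefficients
    `a_0, ..., a_N` and `b_0, ..., b_{N-1}` (encoded via `c j = b_j² > 0`). The
    J-fraction is palindromic (`a_i = a_{N-i}`, `b_j = b_{N-1-j}`) iff `P` divides
    `Q² - b_0² b_1² ⋯ b_{N-1}²`. -/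
theorem stmt_10 (N : ℕ) (a c : ℕ → ℝ) (hc : ∀ j, 0 < c j)
    (P Q : Polynomial ℝ)
    (hP : P = jden a c (N + 1)) (hQ : Q = jnum a c (N + 1)) :
    ((∀ i ≤ N, a i = a (N - i)) ∧ (∀ j < N, c j = c (N - 1 - j))) ↔
      P ∣ Q ^ 2 - C (∏ j ∈ Finset.range N, c j) := by
  subst hP hQ
  set π := ∏ j ∈ Finset.range N, c j with hπ
  have hπpos : 0 < π := Finset.prod_pos (fun j _ => hc j)
  have hdet := jdet a c N
  have hQden : jnum a c (N + 1) = jden (fun i => a (N - i)) (fun j => c (N - 1 - j)) N := by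
    rw [jnum_eq_jden_shift, jden_rev]
    apply jden_ext
    · intro i hi; exact congrArg a (by omega)
    · intro j hj; exact congrArg c (by omega)
  have mQ := jden_monic (fun i => a (N - i)) (fun j => c (N - 1 - j)) N
  have mPN := jden_monic a c N
  have mP := jden_monic a c (N + 1)
  constructor
  · rintro ⟨hA, hC⟩
    have hQP : jnum a c (N + 1) = jden a c N := by
      rw [hQden]; symm
      apply jden_ext
      · intro i hi; exact hA i (by omega)
      · intro j hj; exact hC j (by omega)
    refine ⟨jnum a c N, ?_⟩
    rw [sq]
    nth_rewrite 2 [hQP]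
    linear_combination hdet
  · intro hdvd
    have hcop : IsCoprime (jden a c (N + 1)) (jnum a c (N + 1)) := by
      refine ⟨-(C π⁻¹ * jnum a c N), C π⁻¹ * jden a c N, ?_⟩
      have h1 : (C π⁻¹ : Polynomial ℝ) * C π = 1 := by
        rw [← map_mul, inv_mul_cancel₀ hπpos.ne', map_one]
      linear_combination (C π⁻¹ : Polynomial ℝ) * hdet + h1
    have hdvd2 : jden a c (N + 1) ∣
        jnum a c (N + 1) * (jnum a c (N + 1) - jden a c N) := by
      have e : jnum a c (N + 1) * (jnum a c (N + 1) - jden a c N)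
          = (jnum a c (N + 1) ^ 2 - C π) - jnum a c N * jden a c (N + 1) := by
        rw [sq]; linear_combination -hdet
      rw [e]
      exact dvd_sub hdvd (dvd_mul_left _ _)
    have hdvd3 : jden a c (N + 1) ∣ (jnum a c (N + 1) - jden a c N) :=
      hcop.dvd_of_dvd_mul_left hdvd2
    have dQ : (jnum a c (N + 1)).degree = (N : WithBot ℕ) := by
      rw [hQden, degree_eq_natDegree mQ.1.ne_zero, mQ.2]
    have dPN : (jden a c N).degree = (N : WithBot ℕ) := by
      rw [degree_eq_natDegree mPN.1.ne_zero, mPN.2]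
    have hQne : jnum a c (N + 1) ≠ 0 := by rw [hQden]; exact mQ.1.ne_zero
    have hlC : (jnum a c (N + 1)).leadingCoeff = (jden a c N).leadingCoeff := by
      rw [hQden, mQ.1.leadingCoeff, mPN.1.leadingCoeff]
    have hsub : (jnum a c (N + 1) - jden a c N).degree < (jden a c (N + 1)).degree := by
      have h1 := degree_sub_lt (dQ.trans dPN.symm) hQne hlC
      rw [dQ] at h1
      rw [degree_eq_natDegree mP.1.ne_zero, mP.2]
      exact lt_of_lt_of_le h1 (by exact_mod_cast (by omega : N ≤ N + 1))
    have h0 : jnum a c (N + 1) = jden a c N :=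
      sub_eq_zero.mp (eq_zero_of_dvd_of_degree_lt hdvd3 hsub)
    have hrevP : jden (fun i => a (N - i)) (fun j => c (N - 1 - j)) (N + 1)
        = jden a c (N + 1) := by
      rw [jden_rev a c (N + 1)]
      symm
      apply jden_ext
      · intro i hi; exact congrArg a (by omega)
      · intro j hj; exact congrArg c (by omega)
    have hrevN : jden (fun i => a (N - i)) (fun j => c (N - 1 - j)) N = jden a c N := by
      rw [← hQden]; exact h0
    obtain ⟨uA, uC⟩ := jden_unique (fun i => a (N - i)) (fun j => c (N - 1 - j)) a c
      (fun j => (hc (N - 1 - j)).ne') N hrevP hrevN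
    exact ⟨fun i hi => (uA i hi).symm, fun j hj => (uC j hj).symm⟩
end

section
/- For n ≥ 2, the rational function T_n(x)/((x² − 1) U_{n−1}(x)) admits the palindromic J-fraction expansion 1/(x − (1/2)/(x − (1/4)/(⋯ − (1/4)/(x − (1/2)/x)))) with diagonal coefficients all 0, first and last off-diagonal coefficients b² = 1/2, and all intermediate off-diagonal coefficients b² = 1/4. -/
open Polynomial Polynomial.Chebyshev

open Polynomial

lemma hhalf : (C (2⁻¹:ℝ)) * 2 = 1 := by
  rw [← map_ofNat Polynomial.C 2, ← Polynomial.C_mul]; norm_num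

lemma denA (c : ℕ → ℝ) (n : ℕ) (hc0 : c 0 = 1/2)
    (hcj : ∀ j, 1 ≤ j → j + 2 ≤ n → c j = 1/4) :
    ∀ k, k + 1 ≤ n →
      jden (fun _ => 0) c k = C ((2:ℝ)⁻¹ ^ (k-1)) * T ℝ k ∧
      jden (fun _ => 0) c (k+1) = C ((2:ℝ)⁻¹ ^ k) * T ℝ (k+1) := by
  intro k
  induction k with
  | zero =>
    intro _
    constructor
    · simp [jden]
    · simp [jden, T_one]
  | succ k ih =>
    intro hk
    obtain ⟨h1, h2⟩ := ih (by omega)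
    refine ⟨by simpa using h2, ?_⟩
    have hT : T ℝ ((k:ℤ) + 1 + 1) = 2 * X * T ℝ ((k:ℤ)+1) - T ℝ k := by
      rw [show ((k:ℤ)+1+1) = (k:ℤ)+2 by ring]; exact T_add_two ℝ k
    have e : jden (fun _ => 0) c (k+1+1) =
        (X - C 0) * jden (fun _ => 0) c (k+1) - C (c k) * jden (fun _ => 0) c k := rfl
    rw [e, h1, h2]
    push_cast
    rw [hT]
    rcases Nat.eq_zero_or_pos k with rfl | hkpos
    · rw [hc0]
      simp only [pow_zero, Nat.zero_sub, pow_one, map_one, C_0, T_zero,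
        Nat.cast_zero, zero_add, T_one]
      rw [show ((1:ℝ)/2) = 2⁻¹ by norm_num]
      linear_combination (- X^2 : ℝ[X]) * hhalf
    · rw [hcj k hkpos (by omega)]
      have hk1 : k - 1 + 1 = k := by omega
      have ha : C ((2:ℝ)⁻¹ ^ k) = C 2⁻¹ * C ((2:ℝ)⁻¹^(k-1)) := by
        rw [← Polynomial.C_mul, ← pow_succ', hk1]
      have hb : C ((2:ℝ)⁻¹ ^ (k+1)) = C 2⁻¹ * (C 2⁻¹ * C ((2:ℝ)⁻¹^(k-1))) := by
        rw [← Polynomial.C_mul, ← Polynomial.C_mul, ← pow_succ', ← pow_succ', hk1]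
      have hc : C ((1:ℝ)/4) = C 2⁻¹ * C (2⁻¹:ℝ) := by
        rw [← Polynomial.C_mul]; norm_num
      rw [ha, hb, hc]
      simp only [C_0, sub_zero]
      linear_combination (- C (2⁻¹:ℝ) * C ((2:ℝ)⁻¹^(k-1)) * X * T ℝ ((k:ℤ)+1)) * hhalf

lemma numA (c : ℕ → ℝ) (n : ℕ)
    (hcj : ∀ j, 1 ≤ j → j + 2 ≤ n → c j = 1/4) :
    ∀ k, k + 1 ≤ n →
      jnum (fun _ => 0) c k = C ((2:ℝ)⁻¹ ^ (k-1)) * U ℝ ((k:ℤ) - 1) ∧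
      jnum (fun _ => 0) c (k+1) = C ((2:ℝ)⁻¹ ^ k) * U ℝ (k:ℤ) := by
  intro k
  induction k with
  | zero =>
    intro _
    constructor
    · simp [jnum, U_neg_one]
    · simp [jnum]
  | succ k ih =>
    intro hk
    obtain ⟨h1, h2⟩ := ih (by omega)
    refine ⟨by simpa using h2, ?_⟩
    have hU : U ℝ ((k:ℤ) + 1) = 2 * X * U ℝ k - U ℝ ((k:ℤ) - 1) := U_add_one ℝ k
    have e : jnum (fun _ => 0) c (k+1+1) =
        (X - C 0) * jnum (fun _ => 0) c (k+1) - C (c k) * jnum (fun _ => 0) c k := rfl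
    rw [e, h1, h2]
    push_cast
    rw [hU]
    rcases Nat.eq_zero_or_pos k with rfl | hkpos
    · simp only [Nat.cast_zero, zero_sub, U_neg_one, mul_zero, sub_zero, pow_zero,
        zero_add, pow_one, map_one, C_0, U_zero, mul_one]
      linear_combination (- X) * hhalf
    · rw [hcj k hkpos (by omega)]
      have hk1 : k - 1 + 1 = k := by omega
      have ha : C ((2:ℝ)⁻¹ ^ k) = C 2⁻¹ * C ((2:ℝ)⁻¹^(k-1)) := by
        rw [← Polynomial.C_mul, ← pow_succ', hk1]
      have hb : C ((2:ℝ)⁻¹ ^ (k+1)) = C 2⁻¹ * (C 2⁻¹ * C ((2:ℝ)⁻¹^(k-1))) := by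
        rw [← Polynomial.C_mul, ← Polynomial.C_mul, ← pow_succ', ← pow_succ', hk1]
      have hc : C ((1:ℝ)/4) = C 2⁻¹ * C (2⁻¹:ℝ) := by
        rw [← Polynomial.C_mul]; norm_num
      rw [ha, hb, hc]
      simp only [C_0, sub_zero]
      linear_combination (- C (2⁻¹:ℝ) * C ((2:ℝ)⁻¹^(k-1)) * X * U ℝ (k:ℤ)) * hhalf

/-- **Palindromic J-fraction for Chebyshev polynomials.** For `n ≥ 2`,
    `T_n(x)/((x²-1) U_{n-1}(x))` equals the J-fraction with all diagonal
    coefficients `a_k = 0` and squared off-diagonal coefficients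
    `b_0² = b_{n-1}² = 1/2` and `b_j² = 1/4` in between (stated as the
    cross-multiplied identity of the two ratios). -/
theorem stmt_13 (n : ℕ) (hn : 2 ≤ n) :
    T ℝ n * jden (fun _ => 0) (fun j => if j = 0 ∨ j = n - 1 then (1/2 : ℝ) else 1/4) (n + 1) =
      (X ^ 2 - 1) * U ℝ ((n : ℤ) - 1) *
        jnum (fun _ => 0) (fun j => if j = 0 ∨ j = n - 1 then (1/2 : ℝ) else 1/4) (n + 1) := by
  obtain ⟨m, rfl⟩ : ∃ m, n = m + 2 := ⟨n - 2, by omega⟩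
  set c : ℕ → ℝ := fun j => if j = 0 ∨ j = m + 2 - 1 then (1/2 : ℝ) else 1/4 with hcdef
  have hc0 : c 0 = 1/2 := by simp [hcdef]
  have hcl : c (m + 1) = 1/2 := by simp [hcdef]
  have hcj : ∀ j, 1 ≤ j → j + 2 ≤ m + 2 → c j = 1/4 := by
    intro j hj1 hj2
    simp only [hcdef]
    rw [if_neg]; omega
  obtain ⟨hd1, hd2⟩ := denA c (m+2) hc0 hcj (m+1) (by omega)
  obtain ⟨hn1, hn2⟩ := numA c (m+2) hcj (m+1) (by omega)
  have ed : jden (fun _ => 0) c (m+1+2) =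
      (X - C 0) * jden (fun _ => 0) c (m+2) - C (c (m+1)) * jden (fun _ => 0) c (m+1) := rfl
  have en : jnum (fun _ => 0) c (m+1+2) =
      (X - C 0) * jnum (fun _ => 0) c (m+2) - C (c (m+1)) * jnum (fun _ => 0) c (m+1) := rfl
  have hmm : m + 2 + 1 = m + 1 + 2 := by ring
  rw [hmm, ed, en, hd1, hd2, hn1, hn2, hcl]
  push_cast
  rw [show ((m:ℤ) + 1 + 1) = (m:ℤ) + 2 by ring, show ((m:ℤ) + 2 - 1) = (m:ℤ) + 1 by ring,
    show ((m:ℤ) + 1 - 1) = (m:ℤ) by ring]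
  have hq : C ((1:ℝ)/2) * C ((2:ℝ)⁻¹ ^ m) = C ((2:ℝ)⁻¹ ^ (m+1)) := by
    rw [← Polynomial.C_mul]; congr 1; rw [pow_succ]; ring
  have hA : X * T ℝ ((m:ℤ)+2) - T ℝ ((m:ℤ)+1) = (X^2 - 1) * U ℝ ((m:ℤ)+1) := by
    have e1 := one_sub_X_sq_mul_U_eq_pol_in_T ℝ ((m:ℤ)+1)
    have e2 := T_add_two ℝ ((m:ℤ)+1)
    rw [show ((m:ℤ)+1+1) = (m:ℤ)+2 by ring, show ((m:ℤ)+1+2) = (m:ℤ)+3 by ring] at e1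
    rw [show ((m:ℤ)+1+2) = (m:ℤ)+3 by ring, show ((m:ℤ)+1+1) = (m:ℤ)+2 by ring] at e2
    linear_combination e1 - e2
  have hB : X * U ℝ ((m:ℤ)+1) - U ℝ (m:ℤ) = T ℝ ((m:ℤ)+2) := by
    have e3 := T_eq_U_sub_X_mul_U ℝ ((m:ℤ)+2)
    have e4 := U_add_two ℝ (m:ℤ)
    rw [show ((m:ℤ)+2-1) = (m:ℤ)+1 by ring] at e3
    linear_combination - e3 - e4
  simp only [C_0, sub_zero]
  linear_combination (- T ℝ ((m:ℤ)+1) * T ℝ ((m:ℤ)+2) + (X^2-1) * U ℝ ((m:ℤ)+1) * U ℝ (m:ℤ)) * hq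
    + C ((2:ℝ)⁻¹ ^ (m+1)) * T ℝ ((m:ℤ)+2) * hA
    - C ((2:ℝ)⁻¹ ^ (m+1)) * ((X:ℝ[X])^2-1) * U ℝ ((m:ℤ)+1) * hB
end
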